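/- arXiv:1309.1835 — 8 statements merged into one kernel-verified Lean document; each statement's English description precedes it below -/
import Mathlib

section
/- Let G be a finite simple graph that is claw-free and co-claw-free. If G contains a triangle (a 3-element clique) and an independent set of 3 vertices that is disjoint from that triangle, then G is isomorphic to A_6 or to the complement of A_6. -/
open SimpleGraph

/-- The claw `K_{1,3}`. -/
def claw : SimpleGraph (Fin 1 ⊕ Fin 3) := completeBipartiteGraph (Fin 1) (Fin 3)
/-- The graph `A₆`: a triangle `3 4 5` (playing the role of `a' b' c'`) each of whose edges
is bounded by a further triangle via the vertices `0 1 2` (playing the role of `a b c`). -/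
def A6 : SimpleGraph (Fin 6) := SimpleGraph.fromRel (fun x y =>
  (x = 3 ∧ y = 4) ∨ (x = 4 ∧ y = 5) ∨ (x = 5 ∧ y = 3) ∨
  (x = 0 ∧ y = 4) ∨ (x = 0 ∧ y = 5) ∨ (x = 1 ∧ y = 3) ∨
  (x = 1 ∧ y = 5) ∨ (x = 2 ∧ y = 3) ∨ (x = 2 ∧ y = 4))

namespace Aux

/-- table of the 6 permutations of {0,1,2} -/
def perm3 (m i : Nat) : Nat :=
  if m = 0 then i
  else if m = 1 then (if i = 0 then 0 else if i = 1 then 2 else 1)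
  else if m = 2 then (if i = 0 then 1 else if i = 1 then 0 else 2)
  else if m = 3 then (if i = 0 then 1 else if i = 1 then 2 else 0)
  else if m = 4 then (if i = 0 then 2 else if i = 1 then 0 else 1)
  else (if i = 0 then 2 else if i = 1 then 1 else 0)

/-- the 12 good bipartite patterns: `k < 6` matchings, `6 ≤ k < 12` co-matchings -/
def goodPat (k i j : Nat) : Bool :=
  if k < 6 then perm3 k i == j else perm3 (k - 6) i != j

def eB (b0 b1 b2 b3 b4 b5 b6 b7 b8 : Bool) (i j : Nat) : Bool :=
  if i = 0 then (if j = 0 then b0 else if j = 1 then b1 else b2)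
  else if i = 1 then (if j = 0 then b3 else if j = 1 then b4 else b5)
  else (if j = 0 then b6 else if j = 1 then b7 else b8)

/-- 6-vertex adjacency matrix: 0,1,2 triangle; 3,4,5 independent; `e` = bipartite part -/
def M6 (e : Nat → Nat → Bool) (i j : Nat) : Bool :=
  if i = j then false
  else if i < 3 ∧ j < 3 then true
  else if i < 3 then e i (j - 3)
  else if j < 3 then e j (i - 3)
  else false

def rB (c0 c1 c2 c3 c4 c5 : Bool) (j : Nat) : Bool :=
  if j = 0 then c0 else if j = 1 then c1 else if j = 2 then c2
  else if j = 3 then c3 else if j = 4 then c4 else c5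

/-- 7-vertex matrix: extra vertex 6 with row `r` -/
def M7 (e : Nat → Nat → Bool) (r : Nat → Bool) (i j : Nat) : Bool :=
  if i = j then false else if i = 6 then r j else if j = 6 then r i else M6 e i j

/-- there is a claw: center `u`, leaves `p < q < r` -/
abbrev clM (M : Nat → Nat → Bool) (n : Nat) : Prop :=
  ∃ p < n, ∃ q < n, p < q ∧ M p q = false ∧ ∃ r < n, q < r ∧ M p r = false ∧ M q r = false ∧
    ∃ u < n, M u p = true ∧ M u q = true ∧ M u r = true

/-- there is a co-claw: triangle `p < q < r`, isolated `w` -/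
abbrev coM (M : Nat → Nat → Bool) (n : Nat) : Prop :=
  ∃ p < n, ∃ q < n, p < q ∧ M p q = true ∧ ∃ r < n, q < r ∧ M p r = true ∧ M q r = true ∧
    ∃ w < n, w ≠ p ∧ w ≠ q ∧ w ≠ r ∧ M w p = false ∧ M w q = false ∧ M w r = false

abbrev patGuard (e : Nat → Nat → Bool) : Prop :=
  ∃ k < 12, ∀ i < 3, ∀ j < 3, e i j = goodPat k i j

set_option maxRecDepth 10000 in
set_option maxHeartbeats 2000000 in
lemma stage1 : ∀ b0 b1 b2 b3 b4 b5 b6 b7 b8 : Bool,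
    patGuard (eB b0 b1 b2 b3 b4 b5 b6 b7 b8) ∨
    clM (M6 (eB b0 b1 b2 b3 b4 b5 b6 b7 b8)) 6 ∨ coM (M6 (eB b0 b1 b2 b3 b4 b5 b6 b7 b8)) 6 := by
  decide

set_option maxRecDepth 40000 in
set_option maxHeartbeats 4000000 in
lemma stage2 : ∀ b0 b1 b2 b3 b4 b5 b6 b7 b8 : Bool,
    patGuard (eB b0 b1 b2 b3 b4 b5 b6 b7 b8) → ∀ c0 c1 c2 c3 c4 c5 : Bool,
    clM (M7 (eB b0 b1 b2 b3 b4 b5 b6 b7 b8) (rB c0 c1 c2 c3 c4 c5)) 7 ∨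
    coM (M7 (eB b0 b1 b2 b3 b4 b5 b6 b7 b8) (rB c0 c1 c2 c3 c4 c5)) 7 := by
  decide

def A6B1 (i j : Nat) : Bool :=
  (i == 3 && j == 4) || (i == 4 && j == 5) || (i == 5 && j == 3) ||
  (i == 0 && j == 4) || (i == 0 && j == 5) || (i == 1 && j == 3) ||
  (i == 1 && j == 5) || (i == 2 && j == 3) || (i == 2 && j == 4)
def A6B (i j : Nat) : Bool := A6B1 i j || A6B1 j i
def A6CB (i j : Nat) : Bool := if i = j then false else !A6B i j

/-- relabeling of our six indices into `A6` (for `k ≥ 6`) resp. `A6ᶜ` (for `k < 6`) -/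
def pOf (k i : Nat) : Nat :=
  if i < 3 then (if k < 6 then perm3 k i else 3 + perm3 (k - 6) i)
  else (if k < 6 then i else i - 3)

lemma pOf_lt : ∀ k < 12, ∀ i < 6, pOf k i < 6 := by decide
lemma pOf_inj : ∀ k < 12, ∀ i < 6, ∀ j < 6, pOf k i = pOf k j → i = j := by decide

set_option maxRecDepth 10000 in
set_option maxHeartbeats 2000000 in
lemma stage3 : ∀ b0 b1 b2 b3 b4 b5 b6 b7 b8 : Bool, ∀ k < 12,
    (∀ i < 3, ∀ j < 3, eB b0 b1 b2 b3 b4 b5 b6 b7 b8 i j = goodPat k i j) →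
    ∀ i < 6, ∀ j < 6, M6 (eB b0 b1 b2 b3 b4 b5 b6 b7 b8) i j =
      (if k < 6 then A6CB else A6B) (pOf k i) (pOf k j) := by
  decide

lemma A6_adj_iff : ∀ u v : Fin 6, A6.Adj u v ↔ A6B u.val v.val = true := by
  intro u v
  unfold A6
  rw [SimpleGraph.fromRel_adj]
  revert u v
  decide

lemma A6c_adj_iff : ∀ u v : Fin 6, A6ᶜ.Adj u v ↔ A6CB u.val v.val = true := by
  intro u v
  rw [SimpleGraph.compl_adj]
  unfold A6
  rw [SimpleGraph.fromRel_adj]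
  revert u v
  decide

lemma transfer_claw {V : Type} {G : SimpleGraph V} {M : Nat → Nat → Bool} {n : Nat} (f : Nat → V)
    (hinj : ∀ i, i < n → ∀ j, j < n → i ≠ j → f i ≠ f j)
    (hM : ∀ i, i < n → ∀ j, j < n → (M i j = true ↔ G.Adj (f i) (f j)))
    (h : clM M n) : Nonempty (claw ↪g G) := by
  obtain ⟨p, hp, q, hq, hpq, epq, r, hr, hqr, epr, eqr, u, hu, eup, euq, eur⟩ := h
  have Aup : G.Adj (f u) (f p) := (hM u hu p hp).mp eup
  have Auq : G.Adj (f u) (f q) := (hM u hu q hq).mp euq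
  have Aur : G.Adj (f u) (f r) := (hM u hu r hr).mp eur
  have Npq : ¬ G.Adj (f p) (f q) := fun h' => by simp [(hM p hp q hq).mpr h'] at epq
  have Npr : ¬ G.Adj (f p) (f r) := fun h' => by simp [(hM p hp r hr).mpr h'] at epr
  have Nqr : ¬ G.Adj (f q) (f r) := fun h' => by simp [(hM q hq r hr).mpr h'] at eqr
  have fpq : f p ≠ f q := hinj p hp q hq (Nat.ne_of_lt hpq)
  have fpr : f p ≠ f r := hinj p hp r hr (Nat.ne_of_lt (hpq.trans hqr))
  have fqr : f q ≠ f r := hinj q hq r hr (Nat.ne_of_lt hqr)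
  have key : ∀ (i : Fin 3), G.Adj (f u) (f (![p,q,r] i)) := by
    intro i; fin_cases i
    · exact Aup
    · exact Auq
    · exact Aur
  have key2 : ∀ (i j : Fin 3), i ≠ j → f (![p,q,r] i) ≠ f (![p,q,r] j) := by
    intro i j hij; fin_cases i <;> fin_cases j <;>
      first
        | exact absurd rfl hij
        | exact fpq | exact fpr | exact fqr
        | exact fpq.symm | exact fpr.symm | exact fqr.symm
  have key3 : ∀ (i j : Fin 3), ¬ G.Adj (f (![p,q,r] i)) (f (![p,q,r] j)) := by
    intro i j; fin_cases i <;> fin_cases j <;>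
      first
        | exact fun h => G.irrefl h
        | exact Npq | exact Npr | exact Nqr
        | exact fun h => Npq h.symm | exact fun h => Npr h.symm | exact fun h => Nqr h.symm
  refine ⟨⟨⟨Sum.elim (fun _ => f u) (fun i => f (![p,q,r] i)), ?_⟩, ?_⟩⟩
  · rintro (i | i) (j | j) hij
    · exact congrArg Sum.inl (Subsingleton.elim i j)
    · exact absurd hij (key j).ne
    · exact absurd hij.symm (key i).ne
    · by_cases h : i = j
      · exact congrArg Sum.inr h
      · exact absurd hij (key2 i j h)
  · rintro (a | a) (b | b) <;>
      simp only [Function.Embedding.coeFn_mk, Sum.elim_inl, Sum.elim_inr, claw,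
        completeBipartiteGraph_adj, Sum.isLeft_inl, Sum.isLeft_inr, Sum.isRight_inl,
        Sum.isRight_inr, true_and, and_true, false_and, and_false, or_false, false_or, or_self]
    · exact iff_of_false G.irrefl (by simp)
    · exact iff_of_true (key b) (by simp)
    · exact iff_of_true (key a).symm (by simp)
    · exact iff_of_false (key3 a b) (by simp)

lemma transfer_coclaw {V : Type} {G : SimpleGraph V} {M : Nat → Nat → Bool} {n : Nat} (f : Nat → V)
    (hinj : ∀ i, i < n → ∀ j, j < n → i ≠ j → f i ≠ f j)
    (hM : ∀ i, i < n → ∀ j, j < n → (M i j = true ↔ G.Adj (f i) (f j)))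
    (h : coM M n) : Nonempty (clawᶜ ↪g G) := by
  obtain ⟨p, hp, q, hq, hpq, epq, r, hr, hqr, epr, eqr, w, hw, nwp, nwq, nwr, ewp, ewq, ewr⟩ := h
  have Apq : G.Adj (f p) (f q) := (hM p hp q hq).mp epq
  have Apr : G.Adj (f p) (f r) := (hM p hp r hr).mp epr
  have Aqr : G.Adj (f q) (f r) := (hM q hq r hr).mp eqr
  have Nwp : ¬ G.Adj (f w) (f p) := fun h' => by simp [(hM w hw p hp).mpr h'] at ewp
  have Nwq : ¬ G.Adj (f w) (f q) := fun h' => by simp [(hM w hw q hq).mpr h'] at ewq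
  have Nwr : ¬ G.Adj (f w) (f r) := fun h' => by simp [(hM w hw r hr).mpr h'] at ewr
  have fwp : f w ≠ f p := hinj w hw p hp nwp
  have fwq : f w ≠ f q := hinj w hw q hq nwq
  have fwr : f w ≠ f r := hinj w hw r hr nwr
  have key : ∀ (i : Fin 3), f w ≠ f (![p,q,r] i) := by
    intro i; fin_cases i
    · exact fwp
    · exact fwq
    · exact fwr
  have keyN : ∀ (i : Fin 3), ¬ G.Adj (f w) (f (![p,q,r] i)) := by
    intro i; fin_cases i
    · exact Nwp
    · exact Nwq
    · exact Nwr
  have key3 : ∀ (i j : Fin 3), i ≠ j → G.Adj (f (![p,q,r] i)) (f (![p,q,r] j)) := by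
    intro i j hij; fin_cases i <;> fin_cases j <;>
      first
        | exact absurd rfl hij
        | exact Apq | exact Apr | exact Aqr
        | exact Apq.symm | exact Apr.symm | exact Aqr.symm
  refine ⟨⟨⟨Sum.elim (fun _ => f w) (fun i => f (![p,q,r] i)), ?_⟩, ?_⟩⟩
  · rintro (i | i) (j | j) hij
    · exact congrArg Sum.inl (Subsingleton.elim i j)
    · exact absurd hij (key j)
    · exact absurd hij.symm (key i)
    · by_cases h : i = j
      · exact congrArg Sum.inr h
      · exact absurd ((key3 i j h).ne) (fun hne => hne hij)
  · rintro (a | a) (b | b) <;>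
      simp only [Function.Embedding.coeFn_mk, Sum.elim_inl, Sum.elim_inr, claw,
        SimpleGraph.compl_adj, completeBipartiteGraph_adj, Sum.isLeft_inl, Sum.isLeft_inr,
        Sum.isRight_inl, Sum.isRight_inr, true_and, and_true, false_and, and_false, or_false,
        false_or, or_self, not_false_iff, not_true]
    · exact iff_of_false (G.irrefl) (by simp [Subsingleton.elim a b])
    · exact iff_of_false (keyN b) (by simp)
    · exact iff_of_false (fun h => keyN a h.symm) (by simp)
    · by_cases h : a = b
      · subst h; simp
      · simp only [ne_eq, Sum.inr.injEq, h, not_false_iff, Bool.false_eq_true, and_true,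
          iff_true]
        exact key3 a b h

end Aux

set_option maxHeartbeats 1000000 in
/-- If a finite claw-free and co-claw-free graph contains a triangle and an independent set
of 3 vertices disjoint from it, then it is isomorphic to `A₆` or to its complement. -/
theorem stmt_1 {V : Type} [Fintype V] (G : SimpleGraph V)
    (hclaw : ¬ Nonempty (claw ↪g G)) (hcoclaw : ¬ Nonempty (clawᶜ ↪g G))
    (t s : Finset V) (htcard : t.card = 3) (htclique : G.IsClique ↑t)
    (hscard : s.card = 3) (hsindep : Gᶜ.IsClique ↑s) (hdisj : Disjoint s t) :
    Nonempty (G ≃g A6) ∨ Nonempty (G ≃g A6ᶜ) := by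
  classical
  obtain ⟨x, y, z, hxy, hxz, hyz, rfl⟩ := Finset.card_eq_three.mp htcard
  obtain ⟨a, b, c, hab, hac, hbc, rfl⟩ := Finset.card_eq_three.mp hscard
  -- adjacency facts
  have Axy : G.Adj x y := htclique (by simp) (by simp) hxy
  have Axz : G.Adj x z := htclique (by simp) (by simp) hxz
  have Ayz : G.Adj y z := htclique (by simp) (by simp) hyz
  have Ayx : G.Adj y x := Axy.symm
  have Azx : G.Adj z x := Axz.symm
  have Azy : G.Adj z y := Ayz.symm
  have Nab : ¬ G.Adj a b := ((SimpleGraph.compl_adj G a b).mp (hsindep (by simp) (by simp) hab)).2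
  have Nac : ¬ G.Adj a c := ((SimpleGraph.compl_adj G a c).mp (hsindep (by simp) (by simp) hac)).2
  have Nbc : ¬ G.Adj b c := ((SimpleGraph.compl_adj G b c).mp (hsindep (by simp) (by simp) hbc)).2
  have Nba : ¬ G.Adj b a := fun h => Nab h.symm
  have Nca : ¬ G.Adj c a := fun h => Nac h.symm
  have Ncb : ¬ G.Adj c b := fun h => Nbc h.symm
  -- distinctness across the two sets
  have ha' : a ≠ x ∧ a ≠ y ∧ a ≠ z := by
    simpa using Finset.disjoint_left.mp hdisj (show a ∈ ({a,b,c} : Finset V) by simp)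
  have hb' : b ≠ x ∧ b ≠ y ∧ b ≠ z := by
    simpa using Finset.disjoint_left.mp hdisj (show b ∈ ({a,b,c} : Finset V) by simp)
  have hc' : c ≠ x ∧ c ≠ y ∧ c ≠ z := by
    simpa using Finset.disjoint_left.mp hdisj (show c ∈ ({a,b,c} : Finset V) by simp)
  obtain ⟨hax, hay, haz⟩ := ha'
  obtain ⟨hbx, hby, hbz⟩ := hb'
  obtain ⟨hcx, hcy, hcz⟩ := hc'
  -- the vertex list
  set f : Nat → V := fun i =>
    if i = 0 then x else if i = 1 then y else if i = 2 then z
    else if i = 3 then a else if i = 4 then b else c with hfdef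
  have hf0 : f 0 = x := rfl
  have hf1 : f 1 = y := rfl
  have hf2 : f 2 = z := rfl
  have hf3 : f 3 = a := rfl
  have hf4 : f 4 = b := rfl
  have hf5 : f 5 = c := rfl
  have hne6 : ∀ i, i < 6 → ∀ j, j < 6 → i ≠ j → f i ≠ f j := by
    intro i hi j hj hij
    interval_cases i <;> interval_cases j <;>
      simp only [hf0, hf1, hf2, hf3, hf4, hf5] <;>
      first
        | omega
        | exact hxy | exact hxz | exact hyz | exact hxy.symm | exact hxz.symm | exact hyz.symm
        | exact hab | exact hac | exact hbc | exact hab.symm | exact hac.symm | exact hbc.symm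
        | exact hax | exact hay | exact haz | exact hax.symm | exact hay.symm | exact haz.symm
        | exact hbx | exact hby | exact hbz | exact hbx.symm | exact hby.symm | exact hbz.symm
        | exact hcx | exact hcy | exact hcz | exact hcx.symm | exact hcy.symm | exact hcz.symm
  have agree6 : ∀ i, i < 6 → ∀ j, j < 6 →
      (Aux.M6 (Aux.eB (decide (G.Adj x a)) (decide (G.Adj x b)) (decide (G.Adj x c))
        (decide (G.Adj y a)) (decide (G.Adj y b)) (decide (G.Adj y c))
        (decide (G.Adj z a)) (decide (G.Adj z b)) (decide (G.Adj z c))) i j = true ↔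
        G.Adj (f i) (f j)) := by
    intro i hi j hj
    interval_cases i <;> interval_cases j <;>
      simp only [hf0, hf1, hf2, hf3, hf4, hf5] <;>
      simp [Aux.M6, Aux.eB, Axy, Axz, Ayz, Ayx, Azx, Azy, Nab, Nac, Nbc, Nba, Nca, Ncb,
        G.adj_comm x a, G.adj_comm x b, G.adj_comm x c, G.adj_comm y a, G.adj_comm y b,
        G.adj_comm y c, G.adj_comm z a, G.adj_comm z b, G.adj_comm z c]
  -- stage 1 : the bipartite pattern is one of the 12 good ones
  have hguard : Aux.patGuard (Aux.eB (decide (G.Adj x a)) (decide (G.Adj x b)) (decide (G.Adj x c))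
      (decide (G.Adj y a)) (decide (G.Adj y b)) (decide (G.Adj y c))
      (decide (G.Adj z a)) (decide (G.Adj z b)) (decide (G.Adj z c))) := by
    rcases Aux.stage1 (decide (G.Adj x a)) (decide (G.Adj x b)) (decide (G.Adj x c))
      (decide (G.Adj y a)) (decide (G.Adj y b)) (decide (G.Adj y c))
      (decide (G.Adj z a)) (decide (G.Adj z b)) (decide (G.Adj z c)) with h | h | h
    · exact h
    · exact absurd (Aux.transfer_claw f hne6 agree6 h) hclaw
    · exact absurd (Aux.transfer_coclaw f hne6 agree6 h) hcoclaw
  -- stage 2 : there is no seventh vertex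
  have hall : ∀ v : V, v = x ∨ v = y ∨ v = z ∨ v = a ∨ v = b ∨ v = c := by
    intro v
    by_contra hv
    push_neg at hv
    obtain ⟨hv0, hv1, hv2, hv3, hv4, hv5⟩ := hv
    set f7 : Nat → V := fun i => if i = 6 then v else f i with hf7def
    have hg0 : f7 0 = x := rfl
    have hg1 : f7 1 = y := rfl
    have hg2 : f7 2 = z := rfl
    have hg3 : f7 3 = a := rfl
    have hg4 : f7 4 = b := rfl
    have hg5 : f7 5 = c := rfl
    have hg6 : f7 6 = v := rfl
    have hne7 : ∀ i, i < 7 → ∀ j, j < 7 → i ≠ j → f7 i ≠ f7 j := by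
      intro i hi j hj hij
      interval_cases i <;> interval_cases j <;>
        simp only [hg0, hg1, hg2, hg3, hg4, hg5, hg6] <;>
        first
          | omega
          | exact hxy | exact hxz | exact hyz | exact hxy.symm | exact hxz.symm | exact hyz.symm
          | exact hab | exact hac | exact hbc | exact hab.symm | exact hac.symm | exact hbc.symm
          | exact hax | exact hay | exact haz | exact hax.symm | exact hay.symm | exact haz.symm
          | exact hbx | exact hby | exact hbz | exact hbx.symm | exact hby.symm | exact hbz.symm
          | exact hcx | exact hcy | exact hcz | exact hcx.symm | exact hcy.symm | exact hcz.symm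
          | exact hv0 | exact hv1 | exact hv2 | exact hv3 | exact hv4 | exact hv5
          | exact hv0.symm | exact hv1.symm | exact hv2.symm | exact hv3.symm
          | exact hv4.symm | exact hv5.symm
    have agree7 : ∀ i, i < 7 → ∀ j, j < 7 →
        (Aux.M7 (Aux.eB (decide (G.Adj x a)) (decide (G.Adj x b)) (decide (G.Adj x c))
          (decide (G.Adj y a)) (decide (G.Adj y b)) (decide (G.Adj y c))
          (decide (G.Adj z a)) (decide (G.Adj z b)) (decide (G.Adj z c)))
          (Aux.rB (decide (G.Adj v x)) (decide (G.Adj v y)) (decide (G.Adj v z))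
            (decide (G.Adj v a)) (decide (G.Adj v b)) (decide (G.Adj v c))) i j = true ↔
          G.Adj (f7 i) (f7 j)) := by
      intro i hi j hj
      interval_cases i <;> interval_cases j <;>
        simp only [hg0, hg1, hg2, hg3, hg4, hg5, hg6] <;>
        simp [Aux.M7, Aux.M6, Aux.eB, Aux.rB, Axy, Axz, Ayz, Ayx, Azx, Azy,
          Nab, Nac, Nbc, Nba, Nca, Ncb,
          G.adj_comm x a, G.adj_comm x b, G.adj_comm x c, G.adj_comm y a, G.adj_comm y b,
          G.adj_comm y c, G.adj_comm z a, G.adj_comm z b, G.adj_comm z c,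
          G.adj_comm v x, G.adj_comm v y, G.adj_comm v z,
          G.adj_comm v a, G.adj_comm v b, G.adj_comm v c]
    rcases Aux.stage2 (decide (G.Adj x a)) (decide (G.Adj x b)) (decide (G.Adj x c))
      (decide (G.Adj y a)) (decide (G.Adj y b)) (decide (G.Adj y c))
      (decide (G.Adj z a)) (decide (G.Adj z b)) (decide (G.Adj z c)) hguard
      (decide (G.Adj v x)) (decide (G.Adj v y)) (decide (G.Adj v z))
      (decide (G.Adj v a)) (decide (G.Adj v b)) (decide (G.Adj v c)) with h | h
    · exact hclaw (Aux.transfer_claw f7 hne7 agree7 h)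
    · exact hcoclaw (Aux.transfer_coclaw f7 hne7 agree7 h)
  -- assemble the isomorphism
  obtain ⟨k, hk12, hkpat⟩ := hguard
  have h3 := Aux.stage3 (decide (G.Adj x a)) (decide (G.Adj x b)) (decide (G.Adj x c))
    (decide (G.Adj y a)) (decide (G.Adj y b)) (decide (G.Adj y c))
    (decide (G.Adj z a)) (decide (G.Adj z b)) (decide (G.Adj z c)) k hk12 hkpat
  set g6 : Fin 6 → V := fun i => f i.val with hg6def
  have hginj : Function.Injective g6 := by
    intro i j h
    by_contra hne
    exact hne6 i.val i.isLt j.val j.isLt (fun hv => hne (Fin.ext hv)) h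
  have hgsurj : Function.Surjective g6 := by
    intro u
    rcases hall u with rfl | rfl | rfl | rfl | rfl | rfl
    exacts [⟨0, rfl⟩, ⟨1, rfl⟩, ⟨2, rfl⟩, ⟨3, rfl⟩, ⟨4, rfl⟩, ⟨5, rfl⟩]
  have hgbij : Function.Bijective g6 := ⟨hginj, hgsurj⟩
  set π : Fin 6 → Fin 6 := fun i => ⟨Aux.pOf k i.val, Aux.pOf_lt k hk12 i.val i.isLt⟩
    with hπdef
  have hπinj : Function.Injective π := fun i j h =>
    Fin.ext (Aux.pOf_inj k hk12 i.val i.isLt j.val j.isLt (congrArg Fin.val h))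
  have hπbij : Function.Bijective π := Finite.injective_iff_bijective.mp hπinj
  have hval : ∀ i : Fin 6, ((Equiv.ofBijective π hπbij) i).val = Aux.pOf k i.val := fun _ => rfl
  have hE : ∀ i : Fin 6, (Equiv.ofBijective g6 hgbij).symm (g6 i) = i := fun i =>
    (Equiv.ofBijective g6 hgbij).symm_apply_apply i
  by_cases hk6 : k < 6
  · right
    refine ⟨⟨(Equiv.ofBijective g6 hgbij).symm.trans (Equiv.ofBijective π hπbij), ?_⟩⟩
    intro u w
    obtain ⟨i, rfl⟩ := hgsurj u
    obtain ⟨j, rfl⟩ := hgsurj w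
    simp only [Equiv.trans_apply, hE]
    rw [Aux.A6c_adj_iff, hval i, hval j]
    have h3' := h3 i.val i.isLt j.val j.isLt
    rw [if_pos hk6] at h3'
    rw [← h3']
    exact agree6 i.val i.isLt j.val j.isLt
  · left
    refine ⟨⟨(Equiv.ofBijective g6 hgbij).symm.trans (Equiv.ofBijective π hπbij), ?_⟩⟩
    intro u w
    obtain ⟨i, rfl⟩ := hgsurj u
    obtain ⟨j, rfl⟩ := hgsurj w
    simp only [Equiv.trans_apply, hE]
    rw [Aux.A6_adj_iff, hval i, hval j]
    have h3' := h3 i.val i.isLt j.val j.isLt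
    rw [if_neg hk6] at h3'
    rw [← h3']
    exact agree6 i.val i.isLt j.val j.isLt
end

section
/- Let G and G' be two finite simple graphs on the same vertex set having the same 3-element homogeneous subsets, and let U be the Boolean sum of G and G'. If U is disconnected, then U contains no triangle (no 3-element cycle). -/
open SimpleGraph

/-- The Boolean sum `G ∔ G'`: edges are the symmetric difference of the edge sets. -/
def booleanSum {V : Type*} (G G' : SimpleGraph V) : SimpleGraph V where
  Adj x y := (G.Adj x y ∧ ¬ G'.Adj x y) ∨ (G'.Adj x y ∧ ¬ G.Adj x y)
  symm := by
    constructor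
    rintro x y (⟨h1, h2⟩ | ⟨h1, h2⟩)
    · exact Or.inl ⟨h1.symm, fun h => h2 h.symm⟩
    · exact Or.inr ⟨h1.symm, fun h => h2 h.symm⟩
  loopless := by
    constructor
    rintro x (⟨h, -⟩ | ⟨h, -⟩)
    · exact G.irrefl h
    · exact G'.irrefl h
/-- Two graphs on the same vertex set have the same 3-element homogeneous subsets:
a 3-element set is a clique or an independent set of `G` iff it is one of `G'`. -/
def SameHomog3 {V : Type*} (G G' : SimpleGraph V) : Prop :=
  ∀ s : Finset V, s.card = 3 →
    ((G.IsClique ↑s ∨ Gᶜ.IsClique ↑s) ↔ (G'.IsClique ↑s ∨ G'ᶜ.IsClique ↑s))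

lemma clique3_iff {V : Type} (G : SimpleGraph V) {x y z : V}
    (hxy : x ≠ y) (hxz : x ≠ z) (hyz : y ≠ z) :
    G.IsClique ({x, y, z} : Set V) ↔ G.Adj x y ∧ G.Adj x z ∧ G.Adj y z := by
  constructor
  · intro h
    exact ⟨h (by simp) (by simp) hxy, h (by simp) (by simp) hxz, h (by simp) (by simp) hyz⟩
  · rintro ⟨h1, h2, h3⟩ u hu v hv huv
    simp only [Set.mem_insert_iff, Set.mem_singleton_iff] at hu hv
    rcases hu with rfl | rfl | rfl <;> rcases hv with rfl | rfl | rfl <;>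
      first
        | exact absurd rfl huv
        | assumption
        | exact h1.symm
        | exact h2.symm
        | exact h3.symm

lemma booleanSum_adj {V : Type} (G G' : SimpleGraph V) (x y : V) :
    (booleanSum G G').Adj x y ↔ (G.Adj x y ∧ ¬ G'.Adj x y) ∨ (G'.Adj x y ∧ ¬ G.Adj x y) :=
  Iff.rfl

set_option maxHeartbeats 1000000 in
lemma key_mixed {V : Type} (G G' : SimpleGraph V) (hsame : SameHomog3 G G') {a b z : V}
    (hza : z ≠ a) (hzb : z ≠ b)
    (hab : (booleanSum G G').Adj a b)
    (h1 : ¬ (booleanSum G G').Adj z a) (h2 : ¬ (booleanSum G G').Adj z b) :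
    G.Adj z a ↔ ¬ G.Adj z b := by
  classical
  have hne : a ≠ b := hab.ne
  have hs := hsame {z, a, b} (by
    rw [Finset.card_eq_three]; exact ⟨z, a, b, hza, hzb, hne, rfl⟩)
  have hcoe : ((({z, a, b} : Finset V) : Set V)) = ({z, a, b} : Set V) := by simp
  rw [hcoe, clique3_iff G hza hzb hne, clique3_iff Gᶜ hza hzb hne,
    clique3_iff G' hza hzb hne, clique3_iff G'ᶜ hza hzb hne] at hs
  simp only [SimpleGraph.compl_adj, ne_eq, hza, hzb, hne, not_false_iff, true_and] at hs
  rw [booleanSum_adj] at hab h1 h2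
  tauto

/-- If `U` is the Boolean sum of two graphs with the same 3-element homogeneous subsets and
`U` is disconnected, then `U` contains no triangle. -/
theorem stmt_5 {V : Type} [Fintype V] (G G' : SimpleGraph V) (hsame : SameHomog3 G G')
    (U : SimpleGraph V) (hU : U = booleanSum G G') (hdisc : ¬ U.Connected) :
    U.CliqueFree 3 := by
  classical
  intro s hs
  rw [SimpleGraph.is3Clique_iff] at hs
  obtain ⟨a, b, c, hab, hac, hbc, -⟩ := hs
  apply hdisc
  have reach : ∀ v : V, U.Reachable a v := by
    intro v
    by_cases hva : v = a
    · subst hva; exact SimpleGraph.Reachable.refl v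
    by_cases hvb : v = b
    · subst hvb; exact hab.reachable
    by_cases hvc : v = c
    · subst hvc; exact hac.reachable
    have htri : U.Adj v a ∨ U.Adj v b ∨ U.Adj v c := by
      by_contra h
      push_neg at h
      obtain ⟨h1, h2, h3⟩ := h
      subst hU
      have k1 := key_mixed G G' hsame hva hvb hab h1 h2
      have k2 := key_mixed G G' hsame hva hvc hac h1 h3
      have k3 := key_mixed G G' hsame hvb hvc hbc h2 h3
      tauto
    rcases htri with h | h | h
    · exact h.symm.reachable
    · exact hab.reachable.trans h.symm.reachable
    · exact hac.reachable.trans h.symm.reachable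
  have : Nonempty V := ⟨a⟩
  exact ⟨fun u v => (reach u).symm.trans (reach v)⟩
end

section
/- A finite simple graph G is isomorphic to the line graph of some triangle-free graph if and only if G contains no induced subgraph isomorphic to the claw K_{1,3} and no induced subgraph isomorphic to the diamond (K_4 minus an edge). -/
open SimpleGraph

/-- The diamond: `K₄` minus an edge. -/
def diamond : SimpleGraph (Fin 4) := (⊤ : SimpleGraph (Fin 4)).deleteEdges {s(0, 1)}

section Cliques
variable {V : Type} {G : SimpleGraph V}

lemma claw_of_config {v a b c : V} (hva : G.Adj v a) (hvb : G.Adj v b) (hvc : G.Adj v c)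
    (hab : ¬ G.Adj a b) (hac : ¬ G.Adj a c) (hbc : ¬ G.Adj b c)
    (nab : a ≠ b) (nac : a ≠ c) (nbc : b ≠ c) : Nonempty (claw ↪g G) := by
  refine ⟨⟨⟨Sum.elim (fun _ => v) ![a, b, c], ?_⟩, ?_⟩⟩
  · rintro (x | x) (y | y) h
    · simp [Subsingleton.elim x y]
    all_goals fin_cases x <;> fin_cases y <;> simp_all
  · rintro (x | x) (y | y) <;> fin_cases x <;> fin_cases y <;>
      simp_all [claw, G.adj_comm, DFunLike.coe]

lemma diamond_of_config {a b c d : V} (hac : G.Adj a c) (had : G.Adj a d) (hbc : G.Adj b c)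
    (hbd : G.Adj b d) (hcd : G.Adj c d) (hab : ¬ G.Adj a b) (nab : a ≠ b) :
    Nonempty (diamond ↪g G) := by
  refine ⟨⟨⟨![a, b, c, d], ?_⟩, ?_⟩⟩
  · intro x y h
    fin_cases x <;> fin_cases y <;> simp_all
  · intro x y
    fin_cases x <;> fin_cases y <;>
      simp_all [diamond, G.adj_comm, Sym2.eq, Sym2.rel_iff', Prod.ext_iff, DFunLike.coe]

/-- Maximal cliques. -/
def MaxClique (G : SimpleGraph V) (A : Set V) : Prop :=
  G.IsClique A ∧ ∀ B, G.IsClique B → A ⊆ B → B = A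

lemma exists_maxClique_ext [Fintype V] {s : Set V} (hs : G.IsClique s) :
    ∃ A, s ⊆ A ∧ MaxClique G A := by
  obtain ⟨A, ⟨hA, hsA⟩, hmax⟩ := Set.Finite.exists_maximalFor (fun A : Set V => A.ncard)
    {A | G.IsClique A ∧ s ⊆ A} (Set.toFinite _) ⟨s, hs, subset_rfl⟩
  refine ⟨A, hsA, hA, fun B hB hAB => ?_⟩
  have hcard : A.ncard = B.ncard :=
    le_antisymm (Set.ncard_le_ncard hAB (Set.toFinite _))
      (hmax (j := B) ⟨hB, hsA.trans hAB⟩ (Set.ncard_le_ncard hAB (Set.toFinite _)))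
  exact (Set.eq_of_subset_of_ncard_le hAB hcard.ge (Set.toFinite _)).symm

lemma exists_maxClique [Fintype V] (v : V) : ∃ A, MaxClique G A ∧ v ∈ A := by
  obtain ⟨A, hsub, hA⟩ := exists_maxClique_ext (G.isClique_singleton v)
  exact ⟨A, hA, hsub rfl⟩

variable (hdiam : ¬ Nonempty (diamond ↪g G)) (hclaw : ¬ Nonempty (claw ↪g G))

include hdiam in
/-- neighborhoods are P₃-free -/
lemma adj_trans {v a b c : V} (hva : G.Adj v a) (hvb : G.Adj v b) (hvc : G.Adj v c)
    (hab : G.Adj a b) (hbc : G.Adj b c) (hac_ne : a ≠ c) : G.Adj a c := by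
  by_contra h
  exact hdiam (diamond_of_config hva.symm hab hvc.symm hbc.symm hvb h hac_ne)

include hdiam in
lemma maxClique_eq {A : Set V} {v a : V} (hA : MaxClique G A) (hv : v ∈ A) (ha : a ∈ A)
    (hne : v ≠ a) : A = insert v {x | G.Adj v x ∧ (x = a ∨ G.Adj x a)} := by
  have hva : G.Adj v a := hA.1 hv ha hne
  have hclique : G.IsClique (insert v {x | G.Adj v x ∧ (x = a ∨ G.Adj x a)}) := by
    rw [isClique_insert]
    constructor
    · intro x hx y hy hxy
      obtain ⟨hvx, hxa⟩ := hx
      obtain ⟨hvy, hya⟩ := hy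
      rcases hxa with rfl | hxa
      · rcases hya with rfl | hya
        · exact absurd rfl hxy
        · exact hya.symm
      · rcases hya with rfl | hya
        · exact hxa
        · exact adj_trans hdiam hvx hva hvy hxa hya.symm hxy
    · exact fun b hb _ => hb.1
  have hsub : A ⊆ insert v {x | G.Adj v x ∧ (x = a ∨ G.Adj x a)} := by
    intro z hz
    by_cases hzv : z = v
    · exact hzv ▸ Set.mem_insert _ _
    refine Set.mem_insert_of_mem _ ⟨hA.1 hv hz (Ne.symm hzv), ?_⟩
    by_cases hza : z = a
    · exact Or.inl hza
    · exact Or.inr (hA.1 hz ha hza)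
  exact (hA.2 _ hclique hsub).symm

include hdiam in
lemma maxClique_eq_of_rel {A B : Set V} {v a b : V} (hA : MaxClique G A) (hB : MaxClique G B)
    (hvA : v ∈ A) (hvB : v ∈ B) (haA : a ∈ A) (hbB : b ∈ B) (hna : v ≠ a) (hnb : v ≠ b)
    (hab : a = b ∨ G.Adj a b) : A = B := by
  have hva : G.Adj v a := hA.1 hvA haA hna
  have hvb : G.Adj v b := hB.1 hvB hbB hnb
  rw [maxClique_eq hdiam hA hvA haA hna, maxClique_eq hdiam hB hvB hbB hnb]
  congr 1
  ext x
  simp only [Set.mem_setOf_eq]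
  constructor
  · rintro ⟨hvx, hxa⟩
    refine ⟨hvx, ?_⟩
    rcases hab with rfl | hab
    · exact hxa
    rcases hxa with rfl | hxa
    · by_cases hxb : x = b
      · exact Or.inl hxb
      · exact Or.inr hab
    · by_cases hxb : x = b
      · exact Or.inl hxb
      · exact Or.inr (adj_trans hdiam hvx hva hvb hxa hab hxb)
  · rintro ⟨hvx, hxb⟩
    refine ⟨hvx, ?_⟩
    rcases hab with rfl | hab
    · exact hxb
    rcases hxb with rfl | hxb
    · by_cases hxa : x = a
      · exact Or.inl hxa
      · exact Or.inr hab.symm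
    · by_cases hxa : x = a
      · exact Or.inl hxa
      · exact Or.inr (adj_trans hdiam hvx hvb hva hxb hab.symm hxa)

include hdiam in
lemma edge_maxClique_unique {A B : Set V} {u v : V} (hA : MaxClique G A) (hB : MaxClique G B)
    (huA : u ∈ A) (hvA : v ∈ A) (huB : u ∈ B) (hvB : v ∈ B) (huv : u ≠ v) : A = B :=
  maxClique_eq_of_rel hdiam hA hB huA huB hvA hvB huv huv (Or.inl rfl)

include hdiam hclaw in
lemma two_maxCliques {A B C : Set V} {v : V} (hA : MaxClique G A) (hB : MaxClique G B)
    (hC : MaxClique G C) (hvA : v ∈ A) (hvB : v ∈ B) (hvC : v ∈ C) :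
    A = B ∨ A = C ∨ B = C := by
  by_contra h
  push_neg at h
  obtain ⟨hAB, hAC, hBC⟩ := h
  have hne : ∀ D : Set V, MaxClique G D → v ∈ D → D ≠ {v} → ∃ d ∈ D, v ≠ d := by
    intro D hD hvD hDv
    by_contra hc
    push_neg at hc
    exact hDv (Set.eq_singleton_iff_unique_mem.2 ⟨hvD, fun x hx => ((hc x hx).symm)⟩)
  have hsing : ∀ D : Set V, MaxClique G D → D = {v} → ∀ E : Set V, G.IsClique E → v ∈ E → E = D := by
    intro D hD hDv E hE hvE
    exact hD.2 E hE (by rw [hDv]; exact Set.singleton_subset_iff.2 hvE)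
  obtain ⟨a, haA, hva⟩ := hne A hA hvA (fun h => hAB ((hsing A hA h B hB.1 hvB).symm))
  obtain ⟨b, hbB, hvb⟩ := hne B hB hvB (fun h => hAB (hsing B hB h A hA.1 hvA))
  obtain ⟨c, hcC, hvc⟩ := hne C hC hvC (fun h => hAC (hsing C hC h A hA.1 hvA))
  have nab : ¬ (a = b ∨ G.Adj a b) := fun h =>
    hAB (maxClique_eq_of_rel hdiam hA hB hvA hvB haA hbB hva hvb h)
  have nac : ¬ (a = c ∨ G.Adj a c) := fun h =>
    hAC (maxClique_eq_of_rel hdiam hA hC hvA hvC haA hcC hva hvc h)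
  have nbc : ¬ (b = c ∨ G.Adj b c) := fun h =>
    hBC (maxClique_eq_of_rel hdiam hB hC hvB hvC hbB hcC hvb hvc h)
  push_neg at nab nac nbc
  exact hclaw (claw_of_config (hA.1 hvA haA hva) (hB.1 hvB hbB hvb) (hC.1 hvC hcC hvc)
    nab.2 nac.2 nbc.2 nab.1 nac.1 nbc.1)

end Cliques
section HHdef
variable {V : Type}

/-- The graph whose line graph will be `G`. -/
def HH (G : SimpleGraph V) : SimpleGraph (Set V ⊕ V) where
  Adj x y := match x, y with
    | .inl A, .inl B => A ≠ B ∧ MaxClique G A ∧ MaxClique G B ∧ (A ∩ B).Nonempty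
    | .inl A, .inr v => MaxClique G A ∧ v ∈ A ∧ ∀ B, MaxClique G B → v ∈ B → B = A
    | .inr v, .inl A => MaxClique G A ∧ v ∈ A ∧ ∀ B, MaxClique G B → v ∈ B → B = A
    | .inr _, .inr _ => False
  symm := by
    constructor
    rintro (A | v) (B | w) h
    · exact ⟨Ne.symm h.1, h.2.2.1, h.2.1, Set.inter_comm A B ▸ h.2.2.2⟩
    · exact h
    · exact h
    · exact h
  loopless := by
    constructor
    rintro (A | v) h
    · exact h.1 rfl
    · exact h

variable {G : SimpleGraph V}

@[simp] lemma HH_adj_inl_inl {A B : Set V} : (HH G).Adj (.inl A) (.inl B) ↔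
    A ≠ B ∧ MaxClique G A ∧ MaxClique G B ∧ (A ∩ B).Nonempty := Iff.rfl
@[simp] lemma HH_adj_inl_inr {A : Set V} {v : V} : (HH G).Adj (.inl A) (.inr v) ↔
    MaxClique G A ∧ v ∈ A ∧ ∀ B, MaxClique G B → v ∈ B → B = A := Iff.rfl
@[simp] lemma HH_adj_inr_inl {A : Set V} {v : V} : (HH G).Adj (.inr v) (.inl A) ↔
    MaxClique G A ∧ v ∈ A ∧ ∀ B, MaxClique G B → v ∈ B → B = A := Iff.rfl
@[simp] lemma HH_adj_inr_inr {u v : V} : ¬ (HH G).Adj (.inr u) (.inr v) := fun h => h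

open Classical in
noncomputable def cliqueOf (G : SimpleGraph V) [Fintype V] (v : V) : Set V :=
  if h : ∃ A, MaxClique G A ∧ v ∈ A then h.choose else ∅

open Classical in
noncomputable def otherEnd (G : SimpleGraph V) [Fintype V] (v : V) : Set V ⊕ V :=
  if h : ∃ B, (MaxClique G B ∧ v ∈ B) ∧ B ≠ cliqueOf G v then Sum.inl h.choose else Sum.inr v

noncomputable def phi (G : SimpleGraph V) [Fintype V] (v : V) : Sym2 (Set V ⊕ V) :=
  s(Sum.inl (cliqueOf G v), otherEnd G v)

variable [Fintype V]

lemma cliqueOf_spec (v : V) : MaxClique G (cliqueOf G v) ∧ v ∈ cliqueOf G v := by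
  rw [cliqueOf, dif_pos (exists_maxClique v)]
  exact (exists_maxClique v).choose_spec

lemma phi_mem_edgeSet (v : V) : phi G v ∈ (HH G).edgeSet := by
  rw [phi, mem_edgeSet, otherEnd]
  split_ifs with h
  · obtain ⟨⟨hB, hvB⟩, hne⟩ := h.choose_spec
    exact ⟨Ne.symm hne, (cliqueOf_spec v).1, hB, ⟨v, (cliqueOf_spec v).2, hvB⟩⟩
  · push_neg at h
    exact ⟨(cliqueOf_spec v).1, (cliqueOf_spec v).2, fun B hB hvB => h B ⟨hB, hvB⟩⟩

variable (hdiam : ¬ Nonempty (diamond ↪g G)) (hclaw : ¬ Nonempty (claw ↪g G))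

include hdiam hclaw in
lemma mem_phi_endpoints {v : V} {D : Set V} (hD : MaxClique G D) (hvD : v ∈ D) :
    Sum.inl D ∈ phi G v := by
  rw [phi, Sym2.mem_iff, otherEnd]
  split_ifs with h
  · obtain ⟨⟨hB, hvB⟩, hne⟩ := h.choose_spec
    rcases two_maxCliques hdiam hclaw hD (cliqueOf_spec v).1 hB hvD (cliqueOf_spec v).2 hvB with
      h1 | h1 | h1
    · exact Or.inl (by rw [h1])
    · exact Or.inr (by rw [h1])
    · exact absurd h1.symm hne
  · push_neg at h
    exact Or.inl (by rw [h D ⟨hD, hvD⟩])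

lemma phi_endpoint_cases {v : V} {x : Set V ⊕ V} (hx : x ∈ phi G v) :
    (∃ D, x = Sum.inl D ∧ MaxClique G D ∧ v ∈ D) ∨ x = Sum.inr v := by
  rw [phi, Sym2.mem_iff] at hx
  rcases hx with rfl | rfl
  · exact Or.inl ⟨_, rfl, (cliqueOf_spec v).1, (cliqueOf_spec v).2⟩
  · rw [otherEnd]
    split_ifs with h
    · obtain ⟨⟨hB, hvB⟩, -⟩ := h.choose_spec
      exact Or.inl ⟨_, rfl, hB, hvB⟩
    · exact Or.inr rfl

include hdiam in
lemma phi_inj {u v : V} (h : phi G u = phi G v) : u = v := by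
  by_contra huv
  have hu : Sum.inl (cliqueOf G u) ∈ phi G v := by rw [← h, phi, Sym2.mem_iff]; exact Or.inl rfl
  have hv : Sum.inl (cliqueOf G v) ∈ phi G u := by rw [h, phi, Sym2.mem_iff]; exact Or.inl rfl
  have hou : otherEnd G u ∈ phi G v := by rw [← h, phi, Sym2.mem_iff]; exact Or.inr rfl
  have hov : otherEnd G v ∈ phi G u := by rw [h, phi, Sym2.mem_iff]; exact Or.inr rfl
  -- case analysis on otherEnd G u
  rw [otherEnd] at hou
  split_ifs at hou with h2
  · -- u is in two distinct maximal cliques A := cliqueOf G u and B := h2.choose;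
    -- both are endpoints of phi G v, hence contain v as well
    obtain ⟨⟨hB, huB⟩, hne⟩ := h2.choose_spec
    have h3 : ∀ x : Set V ⊕ V, x ∈ phi G v → (∃ D, x = Sum.inl D ∧ MaxClique G D ∧ v ∈ D) ∨
        x = Sum.inr v := fun x hx => phi_endpoint_cases hx
    rcases h3 _ hu with ⟨D1, hD1e, hD1, hvD1⟩ | hbad
    · rcases h3 _ hou with ⟨D2, hD2e, hD2, hvD2⟩ | hbad
      · -- cliqueOf G u = D1, h2.choose = D2, both contain u and v
        rw [Sum.inl.injEq] at hD1e hD2e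
        subst hD1e
        subst hD2e
        exact hne (edge_maxClique_unique hdiam hB (cliqueOf_spec u).1 huB hvD2
          (cliqueOf_spec u).2 hvD1 huv)
      · exact (nomatch hbad)
    · exact (nomatch hbad)
  · -- otherEnd G u = inr u ∈ phi G v
    rcases phi_endpoint_cases hou with ⟨D, hDe, -, -⟩ | hbad
    · exact nomatch hDe
    · exact huv (Sum.inr.injEq u v ▸ hbad)

include hdiam hclaw in
lemma phi_surj {e : Sym2 (Set V ⊕ V)} (he : e ∈ (HH G).edgeSet) : ∃ v, phi G v = e := by
  induction e using Sym2.inductionOn with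
  | hf x y =>
  rw [mem_edgeSet] at he
  -- helper for the inl-inl case
  have main : ∀ A B : Set V, (HH G).Adj (.inl A) (.inl B) → ∃ v, phi G v = s(Sum.inl A, Sum.inl B) := by
    intro A B hadj
    obtain ⟨hAB, hA, hB, v, hvA, hvB⟩ := hadj
    refine ⟨v, ?_⟩
    have hc := cliqueOf_spec (G := G) v
    have hsec : ∃ C, (MaxClique G C ∧ v ∈ C) ∧ C ≠ cliqueOf G v := by
      rcases two_maxCliques hdiam hclaw hc.1 hA hB hc.2 hvA hvB with h1 | h1 | h1
      · exact ⟨B, ⟨hB, hvB⟩, by rw [h1]; exact Ne.symm hAB⟩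
      · exact ⟨A, ⟨hA, hvA⟩, by rw [h1]; exact hAB⟩
      · exact absurd h1 hAB
    rw [phi, otherEnd, dif_pos hsec]
    obtain ⟨⟨hC, hvC⟩, hCne⟩ := hsec.choose_spec
    rcases two_maxCliques hdiam hclaw hc.1 hA hB hc.2 hvA hvB with h1 | h1 | h1
    · -- cliqueOf = A; choose must be B
      rcases two_maxCliques hdiam hclaw hC hA hB hvC hvA hvB with h2 | h2 | h2
      · exact absurd (h2.trans h1.symm) hCne
      · exact congrArg₂ (fun a b => s(Sum.inl a, Sum.inl b)) h1 h2
      · exact absurd h2 hAB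
    · -- cliqueOf = B; choose must be A
      rcases two_maxCliques hdiam hclaw hC hA hB hvC hvA hvB with h2 | h2 | h2
      · exact (congrArg₂ (fun a b => s(Sum.inl a, Sum.inl b)) h1 h2).trans (Sym2.eq_swap)
      · exact absurd (h2.trans h1.symm) hCne
      · exact absurd h2 hAB
    · exact absurd h1 hAB
  -- helper for the inl-inr case
  have pend : ∀ (A : Set V) (v : V), (HH G).Adj (.inl A) (.inr v) →
      phi G v = s(Sum.inl A, Sum.inr v) := by
    intro A v hadj
    obtain ⟨hA, hvA, huniq⟩ := hadj
    have hcA : cliqueOf G v = A := huniq _ (cliqueOf_spec v).1 (cliqueOf_spec v).2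
    have hno : ¬ ∃ B, (MaxClique G B ∧ v ∈ B) ∧ B ≠ cliqueOf G v := by
      rintro ⟨B, ⟨hB, hvB⟩, hne⟩
      exact hne ((huniq _ hB hvB).trans hcA.symm)
    rw [phi, otherEnd, dif_neg hno, hcA]
  match x, y with
  | .inl A, .inl B => exact main A B he
  | .inl A, .inr v => exact ⟨v, pend A v he⟩
  | .inr v, .inl A => exact ⟨v, by rw [pend A v ((HH G).adj_symm he), Sym2.eq_swap]⟩
  | .inr u, .inr v => exact absurd he (HH_adj_inr_inr)

include hdiam hclaw in
lemma HH_cliqueFree : (HH G).CliqueFree 3 := by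
  classical
  intro s hs
  obtain ⟨x, y, z, hxy, hxz, hyz, rfl⟩ := Finset.card_eq_three.1 hs.card_eq
  have hcl := hs.isClique
  have axy : (HH G).Adj x y := hcl (by simp) (by simp) hxy
  have axz : (HH G).Adj x z := hcl (by simp) (by simp) hxz
  have ayz : (HH G).Adj y z := hcl (by simp) (by simp) hyz
  -- no vertex of the form inr can be in a triangle
  have noinr : ∀ (v : V) (p q : Set V ⊕ V), (HH G).Adj (.inr v) p → (HH G).Adj (.inr v) q →
      p ≠ q → False := by
    rintro v (P | p) (Q | q) hp hq hpq
    · exact hpq (congrArg Sum.inl (hp.2.2 Q hq.1 hq.2.1).symm)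
    · exact hq
    · exact hp
    · exact hp
  match x, y, z with
  | .inr v, _, _ => exact noinr v _ _ axy axz hyz
  | .inl A, .inr v, _ => exact noinr v _ _ axy.symm ayz hxz
  | .inl A, .inl B, .inr v => exact noinr v _ _ axz.symm ayz.symm hxy
  | .inl A, .inl B, .inl C =>
    obtain ⟨hAB, hA, hB, u, huA, huB⟩ := axy
    obtain ⟨hAC, -, hC, w, hwA, hwC⟩ := axz
    obtain ⟨hBC, -, -, t, htB, htC⟩ := ayz
    have hABne : A ≠ B := hAB
    have hACne : A ≠ C := hAC
    have hBCne : B ≠ C := hBC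
    -- u, w, t pairwise distinct
    have nuw : u ≠ w := by
      rintro rfl
      rcases two_maxCliques hdiam hclaw hA hB hC huA huB hwC with h | h | h
      · exact hABne h
      · exact hACne h
      · exact hBCne h
    have nut : u ≠ t := by
      rintro rfl
      rcases two_maxCliques hdiam hclaw hA hB hC huA huB htC with h | h | h
      · exact hABne h
      · exact hACne h
      · exact hBCne h
    have nwt : w ≠ t := by
      rintro rfl
      rcases two_maxCliques hdiam hclaw hA hB hC hwA htB hwC with h | h | h
      · exact hABne h
      · exact hACne h
      · exact hBCne h
    have auw : G.Adj u w := hA.1 huA hwA nuw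
    have aut : G.Adj u t := hB.1 huB htB nut
    have awt : G.Adj w t := hC.1 hwC htC nwt
    have hclq : G.IsClique {u, w, t} := by
      intro p hp q hq hpq
      simp only [Set.mem_insert_iff, Set.mem_singleton_iff] at hp hq
      rcases hp with rfl | rfl | rfl <;> rcases hq with rfl | rfl | rfl <;>
        first
          | exact absurd rfl hpq
          | exact auw | exact auw.symm | exact aut | exact aut.symm
          | exact awt | exact awt.symm
    obtain ⟨D, hsubD, hD⟩ := exists_maxClique_ext hclq
    have huD : u ∈ D := hsubD (by simp)
    have hwD : w ∈ D := hsubD (by simp)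
    have htD : t ∈ D := hsubD (by simp)
    rcases two_maxCliques hdiam hclaw hD hA hB huD huA huB with h | h | h
    · rcases two_maxCliques hdiam hclaw hD hB hC htD htB htC with h' | h' | h'
      · exact hABne (h.symm.trans h')
      · exact hACne (h.symm.trans h')
      · exact hBCne h'
    · rcases two_maxCliques hdiam hclaw hD hA hC hwD hwA hwC with h' | h' | h'
      · exact hABne (h'.symm.trans h)
      · exact hBCne (h.symm.trans h')
      · exact hACne h'
    · exact hABne h

end HHdef
section LG
variable {W : Type} {R : SimpleGraph W}

lemma lineGraph_no_claw_config {e e1 e2 e3 : R.edgeSet}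
    (h1 : R.lineGraph.Adj e e1) (h2 : R.lineGraph.Adj e e2) (h3 : R.lineGraph.Adj e e3)
    (h12 : ¬ R.lineGraph.Adj e1 e2) (h13 : ¬ R.lineGraph.Adj e1 e3)
    (h23 : ¬ R.lineGraph.Adj e2 e3) (n12 : e1 ≠ e2) (n13 : e1 ≠ e3) (n23 : e2 ≠ e3) : False := by
  obtain ⟨⟨u, v⟩, huv⟩ := Quot.exists_rep (e : Sym2 W)
  rw [lineGraph_adj_iff_exists] at h1 h2 h3
  obtain ⟨-, x1, hx1e, hx1⟩ := h1
  obtain ⟨-, x2, hx2e, hx2⟩ := h2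
  obtain ⟨-, x3, hx3e, hx3⟩ := h3
  have key : ∀ (f g : R.edgeSet) (x : W), f ≠ g → x ∈ (f : Sym2 W) → x ∈ (g : Sym2 W) →
      R.lineGraph.Adj f g := fun f g x hfg hxf hxg =>
    lineGraph_adj_iff_exists.2 ⟨hfg, x, hxf, hxg⟩
  rw [← huv] at hx1e hx2e hx3e
  have m1 := Sym2.mem_iff.1 hx1e
  have m2 := Sym2.mem_iff.1 hx2e
  have m3 := Sym2.mem_iff.1 hx3e
  rcases m1 with rfl | rfl <;> rcases m2 with rfl | rfl <;> rcases m3 with rfl | rfl <;>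
    first
      | exact h12 (key _ _ _ n12 hx1 hx2)
      | exact h13 (key _ _ _ n13 hx1 hx3)
      | exact h23 (key _ _ _ n23 hx2 hx3)

lemma lineGraph_triangle_common (hR : R.CliqueFree 3) {e1 e2 e3 : R.edgeSet}
    (h12 : R.lineGraph.Adj e1 e2) (h13 : R.lineGraph.Adj e1 e3) (h23 : R.lineGraph.Adj e2 e3) :
    ∃ x, x ∈ (e1 : Sym2 W) ∧ x ∈ (e2 : Sym2 W) ∧ x ∈ (e3 : Sym2 W) := by
  classical
  rw [lineGraph_adj_iff_exists] at h12 h13 h23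
  obtain ⟨n12, x, hx1, hx2⟩ := h12
  obtain ⟨n13, y, hy1, hy3⟩ := h13
  obtain ⟨n23, z, hz2, hz3⟩ := h23
  by_cases hxy : x = y
  · exact ⟨x, hx1, hx2, hxy ▸ hy3⟩
  by_cases hxz : x = z
  · exact ⟨x, hx1, hx2, hxz ▸ hz3⟩
  by_cases hyz : y = z
  · exact ⟨y, hy1, hyz ▸ hz2, hy3⟩
  exfalso
  have e1eq : (e1 : Sym2 W) = s(x, y) := (Sym2.mem_and_mem_iff hxy).1 ⟨hx1, hy1⟩
  have e2eq : (e2 : Sym2 W) = s(x, z) := (Sym2.mem_and_mem_iff hxz).1 ⟨hx2, hz2⟩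
  have e3eq : (e3 : Sym2 W) = s(y, z) := (Sym2.mem_and_mem_iff hyz).1 ⟨hy3, hz3⟩
  have a1 : R.Adj x y := R.mem_edgeSet.mp (e1eq ▸ e1.2)
  have a2 : R.Adj x z := R.mem_edgeSet.mp (e2eq ▸ e2.2)
  have a3 : R.Adj y z := R.mem_edgeSet.mp (e3eq ▸ e3.2)
  refine hR {x, y, z} ⟨?_, ?_⟩
  · intro p hp q hq hpq
    simp only [Finset.coe_insert, Set.mem_insert_iff, Finset.coe_singleton,
      Set.mem_singleton_iff] at hp hq
    rcases hp with rfl | rfl | rfl <;> rcases hq with rfl | rfl | rfl <;>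
      first
        | exact absurd rfl hpq
        | exact a1 | exact a1.symm | exact a2 | exact a2.symm | exact a3 | exact a3.symm
  · rw [Finset.card_insert_of_notMem (by simp [hxy, hxz]),
      Finset.card_insert_of_notMem (by simp [hyz]), Finset.card_singleton]

end LG

/-- Harary–Holzmann: a finite graph is isomorphic to the line graph of a triangle-free graph
iff it contains no induced claw and no induced diamond. -/
theorem stmt_9 {V : Type} [Fintype V] (G : SimpleGraph V) :
    (∃ (W : Type) (R : SimpleGraph W), R.CliqueFree 3 ∧ Nonempty (G ≃g R.lineGraph)) ↔
      (¬ Nonempty (claw ↪g G) ∧ ¬ Nonempty (diamond ↪g G)) := by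
  constructor
  · rintro ⟨W, R, hR, ⟨e⟩⟩
    constructor
    · rintro ⟨f⟩
      let g : claw ↪g R.lineGraph := Embedding.comp e.toEmbedding f
      have hadj : ∀ i : Fin 3, R.lineGraph.Adj (g (.inl 0)) (g (.inr i)) := fun i =>
        g.map_adj_iff.2 (by simp [claw])
      have hnadj : ∀ i j : Fin 3, ¬ R.lineGraph.Adj (g (.inr i)) (g (.inr j)) :=
        fun i j hc => by simpa [claw] using g.map_adj_iff.1 hc
      have hne : ∀ i j : Fin 3, i ≠ j → g (.inr i) ≠ g (.inr j) := fun i j h =>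
        g.injective.ne (by simp [h])
      exact lineGraph_no_claw_config (hadj 0) (hadj 1) (hadj 2)
        (hnadj 0 1) (hnadj 0 2) (hnadj 1 2)
        (hne 0 1 (by decide)) (hne 0 2 (by decide)) (hne 1 2 (by decide))
    · rintro ⟨f⟩
      let g : diamond ↪g R.lineGraph := Embedding.comp e.toEmbedding f
      have dadj : ∀ i j : Fin 4, diamond.Adj i j → R.lineGraph.Adj (g i) (g j) := fun i j h =>
        g.map_adj_iff.2 h
      have a02 : R.lineGraph.Adj (g 0) (g 2) := dadj 0 2 (by rw [diamond, deleteEdges_adj]; exact ⟨by decide, by simp [Sym2.eq, Sym2.rel_iff', Prod.ext_iff]⟩)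
      have a03 : R.lineGraph.Adj (g 0) (g 3) := dadj 0 3 (by rw [diamond, deleteEdges_adj]; exact ⟨by decide, by simp [Sym2.eq, Sym2.rel_iff', Prod.ext_iff]⟩)
      have a12 : R.lineGraph.Adj (g 1) (g 2) := dadj 1 2 (by rw [diamond, deleteEdges_adj]; exact ⟨by decide, by simp [Sym2.eq, Sym2.rel_iff', Prod.ext_iff]⟩)
      have a13 : R.lineGraph.Adj (g 1) (g 3) := dadj 1 3 (by rw [diamond, deleteEdges_adj]; exact ⟨by decide, by simp [Sym2.eq, Sym2.rel_iff', Prod.ext_iff]⟩)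
      have a23 : R.lineGraph.Adj (g 2) (g 3) := dadj 2 3 (by rw [diamond, deleteEdges_adj]; exact ⟨by decide, by simp [Sym2.eq, Sym2.rel_iff', Prod.ext_iff]⟩)
      have nadj01 : ¬ R.lineGraph.Adj (g 0) (g 1) := fun hc => by
        have := g.map_adj_iff.1 hc
        rw [diamond, deleteEdges_adj] at this
        simp at this
      have ne01 : g 0 ≠ g 1 := g.injective.ne (by decide)
      obtain ⟨x, hx1, hx2, hx3⟩ := lineGraph_triangle_common hR a02 a03 a23
      obtain ⟨y, hy1, hy2, hy3⟩ := lineGraph_triangle_common hR a12 a13 a23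
      by_cases hxy : x = y
      · exact nadj01 (lineGraph_adj_iff_exists.2 ⟨ne01, x, hx1, hxy ▸ hy1⟩)
      · have h2 : (↑(g 2) : Sym2 W) = s(x, y) := (Sym2.mem_and_mem_iff hxy).1 ⟨hx2, hy2⟩
        have h3 : (↑(g 3) : Sym2 W) = s(x, y) := (Sym2.mem_and_mem_iff hxy).1 ⟨hx3, hy3⟩
        exact a23.ne (Subtype.ext (h2.trans h3.symm))
  · rintro ⟨hclaw, hdiam⟩
    refine ⟨Set V ⊕ V, HH G, HH_cliqueFree hdiam hclaw, ⟨?_⟩⟩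
    have hbij : Function.Bijective
        (fun v => (⟨phi G v, phi_mem_edgeSet v⟩ : (HH G).edgeSet)) := by
      constructor
      · intro a b hab
        exact phi_inj hdiam (Subtype.ext_iff.1 hab)
      · rintro ⟨e, he⟩
        obtain ⟨v, hv⟩ := phi_surj hdiam hclaw he
        exact ⟨v, Subtype.ext hv⟩
    refine ⟨Equiv.ofBijective _ hbij, ?_⟩
    intro a b
    show (HH G).lineGraph.Adj ⟨phi G a, _⟩ ⟨phi G b, _⟩ ↔ G.Adj a b
    rw [lineGraph_adj_iff_exists]
    constructor
    · rintro ⟨hne, x, hxa, hxb⟩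
      have hab : a ≠ b := fun h => hne (by subst h; rfl)
      rcases phi_endpoint_cases (v := a) hxa with ⟨D, rfl, hD, haD⟩ | rfl
      · rcases phi_endpoint_cases (v := b) hxb with ⟨D', hD'e, hD', hbD'⟩ | h
        · rw [Sum.inl.injEq] at hD'e
          exact hD.1 haD (hD'e ▸ hbD') hab
        · exact nomatch h
      · rcases phi_endpoint_cases (v := b) hxb with ⟨D', h, -, -⟩ | h
        · exact nomatch h
        · exact absurd (Sum.inr.injEq a b ▸ h) hab
    · intro hab
      refine ⟨fun h => hab.ne (phi_inj hdiam (Subtype.ext_iff.1 h)), ?_⟩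
      obtain ⟨D, hsub, hD⟩ := exists_maxClique_ext (isClique_pair.2 (fun _ => hab))
      exact ⟨Sum.inl D, mem_phi_endpoints hdiam hclaw hD (hsub (Set.mem_insert a {b})),
        mem_phi_endpoints hdiam hclaw hD (hsub (Set.mem_insert_of_mem a rfl))⟩
end

section
/- Let V be a finite set of v vertices, let t and k be positive integers with t ≤ k, t ≤ v − k and k ≤ v, and let G and G' be two simple graphs on V. If G and G' are k-hypomorphic up to complementation, then G and G' are t-hypomorphic up to complementation. -/
open SimpleGraph


/-- Two graphs on the same vertex set are `k`-hypomorphic up to complementation if their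
induced subgraphs on every `k`-element set of vertices are isomorphic up to complementation. -/
def KHypoUpToCompl {V : Type*} (G G' : SimpleGraph V) (k : ℕ) : Prop :=
  ∀ K : Finset V, K.card = k →
    (Nonempty ((G'.induce ↑K) ≃g (G.induce ↑K)) ∨
     Nonempty ((G'.induce ↑K) ≃g (G.induce (↑K : Set V))ᶜ))

namespace StmtTenAux

open Finset

/-! ### The combinatorial kernel lemma (injectivity of the inclusion map) -/

lemma sum_powersetCard_eq_zero {V : Type} [DecidableEq V] (t k : ℕ) (f : Finset V → ℤ)
    (htk : t ≤ k)
    (h0 : ∀ K : Finset V, K.card = k → ∑ T ∈ K.powersetCard t, f T = 0) :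
    ∀ A : Finset V, k ≤ A.card → ∑ T ∈ A.powersetCard t, f T = 0 := by
  intro A hA
  obtain ⟨n, hn⟩ : ∃ n, A.card = k + n := ⟨A.card - k, by omega⟩
  clear hA
  induction n generalizing A with
  | zero => exact h0 A (by omega)
  | succ n ih =>
    have hx : ∑ x ∈ A, ∑ T ∈ (A.erase x).powersetCard t, f T = 0 :=
      Finset.sum_eq_zero fun x hxA => ih _ (by rw [card_erase_of_mem hxA]; omega)
    have hre : ∀ x ∈ A, ∑ T ∈ (A.erase x).powersetCard t, f T
        = ∑ T ∈ (A.powersetCard t).filter (fun T => x ∉ T), f T := by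
      intro x hxA
      apply sum_congr _ (fun _ _ => rfl)
      ext T
      simp only [mem_powersetCard, mem_filter, subset_erase]
      tauto
    have hdouble : ∑ x ∈ A, ∑ T ∈ (A.erase x).powersetCard t, f T
        = ∑ T ∈ A.powersetCard t, ((A.card - t : ℕ) : ℤ) * f T := by
      rw [sum_congr rfl hre]
      rw [sum_comm' (s := A) (t' := A.powersetCard t) (s' := fun T => A \ T)
        (t := fun x => (A.powersetCard t).filter (fun T => x ∉ T))]
      · apply sum_congr rfl
        intro T hT
        rw [sum_const, card_sdiff_of_subset (mem_powersetCard.mp hT).1,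
          (mem_powersetCard.mp hT).2, nsmul_eq_mul]
      · intro x y
        simp only [mem_filter, mem_sdiff]
        tauto
    rw [hx] at hdouble
    have hcard : (0:ℤ) < ((A.card - t : ℕ) : ℤ) := by
      have : t < A.card := by omega
      exact_mod_cast Nat.sub_pos_of_lt this
    rw [← Finset.mul_sum] at hdouble
    rcases mul_eq_zero.mp hdouble.symm with h | h
    · omega
    · exact h

lemma key_inj {V : Type} [Fintype V] [DecidableEq V] (t k : ℕ) (f : Finset V → ℤ)
    (htk : t ≤ k) (htv : t + k ≤ Fintype.card V)
    (h0 : ∀ K : Finset V, K.card = k → ∑ T ∈ K.powersetCard t, f T = 0) :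
    ∀ T : Finset V, T.card = t → f T = 0 := by
  have hS := sum_powersetCard_eq_zero t k f htk h0
  have hF : ∀ n (A B : Finset V), A.card = n → Disjoint A B → A.card ≤ t →
      A.card + B.card + k ≤ Fintype.card V →
      ∑ T ∈ (univ.powersetCard t).filter (fun T => A ⊆ T ∧ Disjoint B T), f T = 0 := by
    intro n
    induction n with
    | zero =>
      intro A B hA _ _ hcards
      rw [card_eq_zero.mp hA] at *
      have : (univ.powersetCard t).filter (fun T => (∅ : Finset V) ⊆ T ∧ Disjoint B T)
          = (univ \ B).powersetCard t := by
        ext T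
        simp only [mem_filter, mem_powersetCard, subset_sdiff, mem_powersetCard_univ,
          empty_subset, true_and, subset_univ, disjoint_comm]
        tauto
      rw [this]
      apply hS
      rw [card_sdiff_of_subset (subset_univ B), card_univ]
      simp at hcards
      omega
    | succ n ih =>
      intro A B hA hdisj hAt hcards
      obtain ⟨x, hxA⟩ : A.Nonempty := card_pos.mp (by omega)
      set A' := A.erase x with hA'
      have hxA' : x ∉ A' := notMem_erase _ _
      have hins : insert x A' = A := insert_erase hxA
      have hcard' : A'.card = n := by rw [hA', card_erase_of_mem hxA]; omega
      have hxB : x ∉ B := disjoint_left.mp hdisj hxA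
      have hsplit :
          ∑ T ∈ (univ.powersetCard t).filter (fun T => A' ⊆ T ∧ Disjoint B T), f T
          = ∑ T ∈ (univ.powersetCard t).filter (fun T => A ⊆ T ∧ Disjoint B T), f T
          + ∑ T ∈ (univ.powersetCard t).filter
              (fun T => A' ⊆ T ∧ Disjoint (insert x B) T), f T := by
        rw [← sum_filter_add_sum_filter_not
          ((univ.powersetCard t).filter (fun T => A' ⊆ T ∧ Disjoint B T)) (fun T => x ∈ T)]
        congr 1
        · apply sum_congr _ (fun _ _ => rfl)
          rw [filter_filter]
          apply filter_congr
          intro T _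
          rw [← hins, insert_subset_iff]
          tauto
        · apply sum_congr _ (fun _ _ => rfl)
          rw [filter_filter]
          apply filter_congr
          intro T _
          rw [disjoint_insert_left]
          tauto
      have h1 := ih A' B hcard' (disjoint_of_subset_left (erase_subset _ _) hdisj)
        (by omega) (by omega)
      have h2 := ih A' (insert x B) hcard'
        (by rw [disjoint_insert_right]
            exact ⟨hxA', disjoint_of_subset_left (erase_subset _ _) hdisj⟩)
        (by omega)
        (by rw [card_insert_of_notMem hxB]; omega)
      rw [h1, h2, add_zero] at hsplit
      linarith
  intro T0 hT0
  have hmain := hF T0.card T0 ∅ rfl (disjoint_empty_right _) (le_of_eq hT0)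
    (by rw [card_empty, hT0]; omega)
  have hsingle : (univ.powersetCard t).filter (fun T => T0 ⊆ T ∧ Disjoint (∅ : Finset V) T)
      = {T0} := by
    ext T
    simp only [mem_filter, mem_powersetCard_univ, mem_singleton, disjoint_empty_left, and_true]
    constructor
    · rintro ⟨hc, hsub⟩
      exact (Finset.eq_of_subset_of_card_le hsub (by omega)).symm
    · rintro rfl
      exact ⟨hT0, Finset.Subset.refl _⟩
  rw [hsingle, sum_singleton] at hmain
  exact hmain

/-! ### Graph glue : isomorphism up to complementation -/

variable {α β γ : Type*}

/-- `H` and `X` are isomorphic up to complementation. -/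
def UpC (H : SimpleGraph α) (X : SimpleGraph β) : Prop :=
  Nonempty (H ≃g X) ∨ Nonempty (H ≃g Xᶜ)

/-- An isomorphism of graphs yields one of the complements. -/
def isoCompl {H : SimpleGraph α} {X : SimpleGraph β} (e : H ≃g X) : Hᶜ ≃g Xᶜ :=
  ⟨e.toEquiv, by intro a b; simp [compl_adj, e.map_rel_iff, e.toEquiv.injective.ne_iff]⟩

def castIso {H H' : SimpleGraph α} (h : H = H') : H ≃g H' := h ▸ Iso.refl

lemma upc_refl (H : SimpleGraph α) : UpC H H := Or.inl ⟨Iso.refl⟩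

lemma upc_congr {H₁ : SimpleGraph α} {H₂ : SimpleGraph β} {X : SimpleGraph γ}
    (i : H₁ ≃g H₂) : UpC H₁ X ↔ UpC H₂ X := by
  constructor
  · rintro (h | h) <;> obtain ⟨e⟩ := h
    · exact Or.inl ⟨i.symm.trans e⟩
    · exact Or.inr ⟨i.symm.trans e⟩
  · rintro (h | h) <;> obtain ⟨e⟩ := h
    · exact Or.inl ⟨i.trans e⟩
    · exact Or.inr ⟨i.trans e⟩

lemma upc_compl {H : SimpleGraph α} {X : SimpleGraph β} :
    UpC Hᶜ X ↔ UpC H X := by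
  constructor
  · rintro (h | h) <;> obtain ⟨e⟩ := h
    · exact Or.inr ⟨(castIso (compl_compl H).symm).trans (isoCompl e)⟩
    · exact Or.inl ⟨((castIso (compl_compl H).symm).trans (isoCompl e)).trans
        (castIso (compl_compl X))⟩
  · rintro (h | h) <;> obtain ⟨e⟩ := h
    · exact Or.inr ⟨isoCompl e⟩
    · exact Or.inl ⟨(isoCompl e).trans (castIso (compl_compl X))⟩

lemma upc_symm {H : SimpleGraph α} {X : SimpleGraph β} (h : UpC H X) : UpC X H := by
  rcases h with h | h <;> obtain ⟨e⟩ := h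
  · exact Or.inl ⟨e.symm⟩
  · exact Or.inr ⟨(castIso (compl_compl X).symm).trans (isoCompl e.symm)⟩

lemma compl_induce (G : SimpleGraph α) (s : Set α) :
    (Gᶜ).induce s = (G.induce s)ᶜ := by
  ext a b; simp [Subtype.ext_iff]

/-- Transport an induced subgraph along an adjacency-preserving embedding. -/
noncomputable def induceMapIso (Γ : SimpleGraph α) (Δ : SimpleGraph β) (f : α ↪ β)
    (hf : ∀ a b, Δ.Adj (f a) (f b) ↔ Γ.Adj a b) (A : Finset α) :
    Γ.induce ↑A ≃g Δ.induce ↑(A.map f) where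
  toEquiv := (Equiv.Set.image f ↑A f.injective).trans
    (Equiv.setCongr (Finset.coe_map f A).symm)
  map_rel_iff' := by
    intro a b
    simp only [Equiv.trans_apply, Equiv.Set.image_apply, Equiv.setCongr_apply,
      comap_adj, Function.Embedding.coe_subtype]
    exact hf _ _

end StmtTenAux

open StmtTenAux Finset in
/-- Proposition 4: if `t ≤ k`, `t ≤ v - k`, `k ≤ v` and `G, G'` are `k`-hypomorphic up to
complementation, then they are `t`-hypomorphic up to complementation. -/
theorem stmt_10 {V : Type} [Fintype V] (G G' : SimpleGraph V) (t k : ℕ)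
    (ht : 0 < t) (hk : 0 < k) (htk : t ≤ k) (htvk : t ≤ Fintype.card V - k)
    (hkv : k ≤ Fintype.card V) (h : KHypoUpToCompl G G' k) :
    KHypoUpToCompl G G' t := by
  classical
  intro T0 hT0
  set X : SimpleGraph ↥(↑T0 : Set V) := G'.induce (↑T0 : Set V) with hX
  set f : Finset V → ℤ := fun T =>
    (if UpC (G.induce (↑T : Set V)) X then 1 else 0)
      - (if UpC (G'.induce (↑T : Set V)) X then 1 else 0) with hf
  have hker : ∀ K : Finset V, K.card = k → ∑ T ∈ K.powersetCard t, f T = 0 := by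
    intro K hK
    rw [hf]
    simp only [Finset.sum_sub_distrib, sub_eq_zero]
    -- reduce to attach-indexed sums
    have hKmap : K = K.attach.map (Function.Embedding.subtype _) := attach_map_val.symm
    -- the isomorphism on K
    have hUK := h K hK
    -- uniform handling : e : G'.induce K ≃g H with key property
    obtain ⟨H, ⟨e⟩, hH⟩ : ∃ H : SimpleGraph ↥(↑K : Set V),
        Nonempty ((G'.induce (↑K : Set V)) ≃g H) ∧
        ∀ A : Finset ↥(↑K : Set V),
          (UpC (H.induce (↑A : Set ↥(↑K : Set V))) X ↔
           UpC (((G.induce (↑K : Set V)).induce (↑A : Set ↥(↑K : Set V)))) X) := by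
      rcases hUK with hUK | hUK <;> obtain ⟨e⟩ := hUK
      · exact ⟨G.induce ↑K, ⟨e⟩, fun A => Iff.rfl⟩
      · refine ⟨(G.induce (↑K : Set V))ᶜ, ⟨e⟩, fun A => ?_⟩
        rw [compl_induce]
        exact upc_compl
    -- pointwise transport
    have hpt : ∀ A : Finset ↥(↑K : Set V),
        (UpC (G'.induce (↑(A.map (Function.Embedding.subtype _)) : Set V)) X ↔
         UpC (G.induce
           (↑((A.map e.toEquiv.toEmbedding).map (Function.Embedding.subtype _)) : Set V)) X) := by
      intro A
      have i1 := induceMapIso (G'.induce (↑K : Set V)) G' (Function.Embedding.subtype _)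
        (fun a b => Iff.rfl) A
      have i2 := induceMapIso (G'.induce (↑K : Set V)) H e.toEquiv.toEmbedding
        (fun a b => e.map_rel_iff) A
      have i3 := induceMapIso (G.induce (↑K : Set V)) G (Function.Embedding.subtype _)
        (fun a b => Iff.rfl) (A.map e.toEquiv.toEmbedding)
      rw [← upc_congr i1, upc_congr i2, hH, upc_congr i3]
    -- now reindex the sums
    conv_lhs => rw [hKmap]
    conv_rhs => rw [hKmap]
    rw [powersetCard_map, Finset.sum_map, Finset.sum_map]
    simp only [RelEmbedding.coe_toEmbedding, Finset.mapEmbedding_apply]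
    rw [← Finset.univ_eq_attach]
    symm
    have hinv : ∀ A : Finset ↥(↑K : Set V),
        (A.map e.toEquiv.toEmbedding).map e.toEquiv.symm.toEmbedding = A := by
      intro A
      rw [Finset.map_map]
      ext x
      simp [Finset.mem_map, Equiv.symm_apply_eq]
    have hinv' : ∀ A : Finset ↥(↑K : Set V),
        (A.map e.toEquiv.symm.toEmbedding).map e.toEquiv.toEmbedding = A := by
      intro A
      rw [Finset.map_map]
      ext x
      simp only [Finset.mem_map, Function.Embedding.trans_apply, Equiv.coe_toEmbedding, Equiv.apply_symm_apply, exists_eq_right]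
    refine Finset.sum_nbij' (fun A => A.map e.toEquiv.toEmbedding)
      (fun A => A.map e.toEquiv.symm.toEmbedding) ?_ ?_ ?_ ?_ ?_
    · intro A hA
      rw [Finset.mem_powersetCard_univ] at hA ⊢
      rw [Finset.card_map, hA]
    · intro A hA
      rw [Finset.mem_powersetCard_univ] at hA ⊢
      rw [Finset.card_map, hA]
    · intro A _; exact hinv A
    · intro A _; exact hinv' A
    · intro A hA
      exact if_congr (hpt A) rfl rfl
  have hzero := key_inj t k f htk (by omega) hker T0 hT0
  rw [hf] at hzero
  simp only at hzero
  have hG' : UpC (G'.induce (↑T0 : Set V)) X := upc_refl _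
  rw [if_pos hG'] at hzero
  have hG : UpC (G.induce (↑T0 : Set V)) X := by
    by_contra hc
    rw [if_neg hc] at hzero
    omega
  exact upc_symm hG
end

section
/- Let G be a finite simple graph that is claw-free and co-claw-free. If G is disconnected, then every connected component of G is a cycle of length at least 4 or a path; equivalently, G is triangle-free and every vertex of G has degree at most 2, with no component a cycle of length 3. -/
open SimpleGraph

/-- The connected component `c` of `G` induces a cycle of length at least 4 or a path. -/
def CompIsCycleGe4OrPath {V : Type*} (G : SimpleGraph V) (c : G.ConnectedComponent) : Prop :=
  (∃ n, 4 ≤ n ∧ Nonempty (G.induce c.supp ≃g cycleGraph n)) ∨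
  (∃ n, Nonempty (G.induce c.supp ≃g pathGraph n))

namespace StmtAux



variable {W : Type} (H : SimpleGraph W)

open Classical in
/-- the next vertex in a walk: some neighbor of `c` other than `p`, if it exists. -/
noncomputable def nextVert (p c : W) : W :=
  if h : ∃ x, H.Adj c x ∧ x ≠ p then h.choose else c

lemma nextVert_ne {p c : W} (h : nextVert H p c ≠ c) :
    H.Adj c (nextVert H p c) ∧ nextVert H p c ≠ p := by
  unfold nextVert at h ⊢
  split_ifs at h ⊢ with hex
  · exact hex.choose_spec
  · exact absurd rfl h

lemma nextVert_exists {p c : W} (h : ∃ x, H.Adj c x ∧ x ≠ p) :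
    nextVert H p c ≠ c := by
  unfold nextVert
  rw [dif_pos h]
  exact fun hc => H.irrefl (hc ▸ h.choose_spec.1)

lemma nextVert_eq {p c : W} (h : nextVert H p c = c) :
    ∀ y, H.Adj c y → y = p := by
  intro y hy
  by_contra hne
  exact nextVert_exists H ⟨y, hy, hne⟩ h

/-- the walk sequence: (current, previous). -/
noncomputable def walkP (v0 : W) : ℕ → W × W
  | 0 => (v0, v0)
  | k+1 => (nextVert H (walkP v0 k).2 (walkP v0 k).1, (walkP v0 k).1)

/-- the walk sequence -/
noncomputable def fw (v0 : W) (k : ℕ) : W := (walkP H v0 k).1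

lemma fw_zero (v0 : W) : fw H v0 0 = v0 := rfl

lemma walkP_snd (v0 : W) (k : ℕ) : (walkP H v0 (k+1)).2 = fw H v0 k := rfl

lemma fw_succ (v0 : W) (k : ℕ) :
    fw H v0 (k+1) = nextVert H (walkP H v0 k).2 (fw H v0 k) := rfl

lemma fw_succ_succ (v0 : W) (k : ℕ) :
    fw H v0 (k+2) = nextVert H (fw H v0 k) (fw H v0 (k+1)) := rfl

lemma fw_one (v0 : W) : fw H v0 1 = nextVert H v0 v0 := rfl

/-- if the walk moves, there is an edge -/
lemma fw_adj (v0 : W) (k : ℕ) (h : fw H v0 (k+1) ≠ fw H v0 k) :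
    H.Adj (fw H v0 k) (fw H v0 (k+1)) :=
  (nextVert_ne H (by rw [← fw_succ]; exact h)).1

/-- the walk does not backtrack -/
lemma fw_nb (v0 : W) (k : ℕ) (h : fw H v0 (k+2) ≠ fw H v0 (k+1)) :
    fw H v0 (k+2) ≠ fw H v0 k :=
  (nextVert_ne H (p := fw H v0 k) (c := fw H v0 (k+1)) (by rw [← fw_succ_succ]; exact h)).2

/-- when stuck, the only possible neighbor is the previous vertex -/
lemma fw_stuck (v0 : W) (k : ℕ) (h : fw H v0 (k+1) = fw H v0 k) :
    ∀ y, H.Adj (fw H v0 k) y → y = (walkP H v0 k).2 :=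
  nextVert_eq H (by rw [← fw_succ]; exact h)

/-- a set containing a vertex and closed under adjacency contains everything reachable -/
lemma closure_walk {S : Set W} (hcl : ∀ x ∈ S, ∀ y, H.Adj x y → y ∈ S) :
    ∀ {u x : W}, H.Walk u x → u ∈ S → x ∈ S := by
  intro u x p
  induction p with
  | nil => exact id
  | cons h q ih => exact fun hu => ih (hcl _ hu _ h)

section Inj

variable {H}

/-- The key injectivity lemma: along a non-stuck walk, the first repeat closes at index 0. -/
lemma walk_inj (hdeg : ∀ v a b c : W, H.Adj v a → H.Adj v b → H.Adj v c →
      a = b ∨ a = c ∨ b = c)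
    (v0 : W) {j : ℕ}
    (hns : ∀ t < j, fw H v0 (t+1) ≠ fw H v0 t)
    (hmin : ∀ i' j', i' < j' → j' < j → fw H v0 j' ≠ fw H v0 i')
    {i : ℕ} (hij : i < j) (heq : fw H v0 j = fw H v0 i) : i = 0 := by
  set f := fw H v0 with hf
  by_contra hi0
  have hi1 : 1 ≤ i := Nat.one_le_iff_ne_zero.2 hi0
  -- j ≥ i + 3
  have hj1 : j ≠ i + 1 := by
    rintro rfl
    exact hns i (by omega) heq
  have hj2 : j ≠ i + 2 := by
    rintro rfl
    exact fw_nb H v0 i (hns (i+1) (by omega)) heq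
  have hj3 : i + 3 ≤ j := by omega
  -- three distinct neighbors of f i
  have hadj1 : H.Adj (f i) (f (i-1)) := by
    have := fw_adj H v0 (i-1) (hns (i-1) (by omega))
    simp only [← hf] at this
    rw [show i - 1 + 1 = i by omega] at this
    exact this.symm
  have hadj2 : H.Adj (f i) (f (i+1)) := fw_adj H v0 i (hns i (by omega))
  have hadj3 : H.Adj (f i) (f (j-1)) := by
    have := fw_adj H v0 (j-1) (hns (j-1) (by omega))
    simp only [← hf] at this
    rw [show j - 1 + 1 = j by omega, heq] at this
    exact this.symm
  have hd1 : f (i-1) ≠ f (i+1) := by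
    intro h
    exact hmin (i-1) (i+1) (by omega) (by omega) h.symm
  have hd2 : f (i-1) ≠ f (j-1) := by
    intro h
    exact hmin (i-1) (j-1) (by omega) (by omega) h.symm
  have hd3 : f (i+1) ≠ f (j-1) := by
    intro h
    exact hmin (i+1) (j-1) (by omega) (by omega) h.symm
  rcases hdeg (f i) (f (i-1)) (f (i+1)) (f (j-1)) hadj1 hadj2 hadj3 with h | h | h
  · exact hd1 h
  · exact hd2 h
  · exact hd3 h

end Inj


variable {W : Type} {H : SimpleGraph W}

theorem classify_path [Fintype W] (hconn : H.Preconnected)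
    (hdeg : ∀ v a b c : W, H.Adj v a → H.Adj v b → H.Adj v c →
      a = b ∨ a = c ∨ b = c)
    (v0 : W) (hv0 : ∀ a b, H.Adj v0 a → H.Adj v0 b → a = b) :
    ∃ n, Nonempty (H ≃g pathGraph n) := by
  classical
  set f := fw H v0 with hf
  have hf0 : f 0 = v0 := rfl
  -- no repeats while not stuck
  have hinj : ∀ j, (∀ t < j, f (t+1) ≠ f t) → ∀ i < j, f j ≠ f i := by
    intro j
    induction j using Nat.strong_induction_on with
    | _ j ih =>
      intro hns i hij heq
      have hmin : ∀ i' j', i' < j' → j' < j → f j' ≠ f i' := fun i' j' h1 h2 =>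
        ih j' h2 (fun t ht => hns t (ht.trans h2)) i' h1
      have hi0 : i = 0 := walk_inj hdeg v0 hns hmin hij heq
      subst hi0
      have hj1 : j ≠ 1 := by rintro rfl; exact hns 0 (by omega) heq
      have hj2 : j ≠ 2 := by rintro rfl; exact fw_nb H v0 0 (hns 1 (by omega)) heq
      have hj3 : 3 ≤ j := by omega
      have hadj1 : H.Adj v0 (f 1) := fw_adj H v0 0 (hns 0 (by omega))
      have hadj2 : H.Adj v0 (f (j-1)) := by
        have := fw_adj H v0 (j-1) (hns (j-1) (by omega))
        simp only [← hf] at this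
        rw [show j - 1 + 1 = j by omega, heq] at this
        exact this.symm
      exact hmin 1 (j-1) (by omega) (by omega) (hv0 _ _ hadj2 hadj1)
  -- the walk must get stuck
  have hstuck : ∃ k, f (k+1) = f k := by
    by_contra h
    push_neg at h
    obtain ⟨a, b, hab, heq⟩ := Finite.exists_ne_map_eq_of_infinite f
    rcases hab.lt_or_gt with h' | h'
    · exact hinj b (fun t _ => h t) a h' heq.symm
    · exact hinj a (fun t _ => h t) b h' heq
  obtain ⟨m, hm, hlt⟩ : ∃ m, f (m+1) = f m ∧ ∀ t < m, f (t+1) ≠ f t :=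
    ⟨Nat.find hstuck, Nat.find_spec hstuck, fun t ht => Nat.find_min hstuck ht⟩
  have hinjm : ∀ i j, i ≤ m → j ≤ m → f i = f j → i = j := by
    intro i j hi hj heq
    rcases lt_trichotomy i j with h | h | h
    · exact absurd heq.symm (hinj j (fun t ht => hlt t (by omega)) i h)
    · exact h
    · exact absurd heq (hinj i (fun t ht => hlt t (by omega)) j h)
  -- neighbor classification
  have nbr : ∀ k, k ≤ m → ∀ y, H.Adj (f k) y →
      (k+1 ≤ m ∧ y = f (k+1)) ∨ (1 ≤ k ∧ y = f (k-1)) := by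
    intro k hk y hy
    rcases eq_or_lt_of_le hk with heq | hklt
    · subst heq
      have hst := fw_stuck H v0 k hm y hy
      cases k with
      | zero =>
        rw [show (walkP H v0 0).2 = v0 from rfl] at hst
        rw [hst] at hy
        exact absurd hy H.irrefl
      | succ m' =>
        right
        exact ⟨by omega, by rw [hst]; rfl⟩
    · have hadj : H.Adj (f k) (f (k+1)) := fw_adj H v0 k (hlt k hklt)
      cases k with
      | zero =>
        exact Or.inl ⟨by omega, hv0 y (f 1) hy hadj⟩
      | succ k' =>
        have hadjp : H.Adj (f (k'+1)) (f k') :=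
          (fw_adj H v0 k' (hlt k' (by omega))).symm
        rcases hdeg (f (k'+1)) y (f (k'+2)) (f k') hy hadj hadjp with h | h | h
        · exact Or.inl ⟨by omega, h⟩
        · exact Or.inr ⟨by omega, h⟩
        · exact absurd h (fw_nb H v0 k' (hlt (k'+1) hklt))
  -- the range of the walk is everything
  set S : Set W := {x | ∃ k ≤ m, f k = x} with hS
  have hcl : ∀ x ∈ S, ∀ y, H.Adj x y → y ∈ S := by
    rintro x ⟨k, hk, rfl⟩ y hy
    rcases nbr k hk y hy with ⟨h1, rfl⟩ | ⟨h1, rfl⟩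
    · exact ⟨k+1, h1, rfl⟩
    · exact ⟨k-1, by omega, rfl⟩
  have huniv : ∀ x, x ∈ S := fun x =>
    closure_walk H hcl ((hconn v0 x).some) ⟨0, by omega, rfl⟩
  -- the bijection
  set φ : Fin (m+1) → W := fun i => f i.val with hφ
  have hbij : Function.Bijective φ := by
    constructor
    · intro i j hij
      exact Fin.ext (hinjm i.val j.val (by omega) (by omega) hij)
    · intro x
      obtain ⟨k, hk, rfl⟩ := huniv x
      exact ⟨⟨k, by omega⟩, rfl⟩
  refine ⟨m+1, ⟨RelIso.symm ⟨Equiv.ofBijective φ hbij, ?_⟩⟩⟩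
  intro i j
  show H.Adj (φ i) (φ j) ↔ (pathGraph (m+1)).Adj i j
  rw [pathGraph_adj]
  constructor
  · intro hadj
    rcases nbr i.val (by omega) (φ j) hadj with ⟨h1, heq⟩ | ⟨h1, heq⟩
    · exact Or.inl (hinjm j.val (i.val+1) (by omega) h1 heq).symm
    · right
      have := hinjm j.val (i.val-1) (by omega) (by omega) heq
      omega
  · rintro (h | h)
    · have hi : i.val < m := by omega
      have := fw_adj H v0 i.val (hlt i.val hi)
      simp only [← hf] at this
      rw [show (i.val + 1) = j.val from h] at this
      exact this
    · have hj : j.val < m := by omega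
      have := fw_adj H v0 j.val (hlt j.val hj)
      simp only [← hf] at this
      rw [show (j.val + 1) = i.val from h] at this
      exact this.symm


variable {W : Type} {H : SimpleGraph W}

theorem classify_cycle [Fintype W] [Nonempty W] (hconn : H.Preconnected)
    (hdeg : ∀ v a b c : W, H.Adj v a → H.Adj v b → H.Adj v c →
      a = b ∨ a = c ∨ b = c)
    (htri : ∀ a b c : W, H.Adj a b → H.Adj a c → H.Adj b c → False)
    (hall : ∀ v : W, ∃ a b, a ≠ b ∧ H.Adj v a ∧ H.Adj v b) :
    ∃ n, 4 ≤ n ∧ Nonempty (H ≃g cycleGraph n) := by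
  classical
  obtain ⟨v0⟩ := ‹Nonempty W›
  set f := fw H v0 with hf
  have notstuck : ∀ k, f (k+1) ≠ f k := by
    intro k
    have hex : ∃ x, H.Adj (f k) x ∧ x ≠ (walkP H v0 k).2 := by
      obtain ⟨a, b, hab, ha, hb⟩ := hall (f k)
      by_cases h : a = (walkP H v0 k).2
      · exact ⟨b, hb, fun hh => hab (h ▸ hh ▸ rfl)⟩
      · exact ⟨a, ha, h⟩
    exact nextVert_exists H hex
  have hrep : ∃ j, ∃ i, i < j ∧ f j = f i := by
    obtain ⟨a, b, hab, heq⟩ := Finite.exists_ne_map_eq_of_infinite f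
    rcases hab.lt_or_gt with h' | h'
    · exact ⟨b, a, h', heq.symm⟩
    · exact ⟨a, b, h', heq⟩
  obtain ⟨m, ⟨i, him, heqi⟩, hminP⟩ :
      ∃ m, (∃ i, i < m ∧ f m = f i) ∧ ∀ j' < m, ¬∃ i, i < j' ∧ f j' = f i :=
    ⟨Nat.find hrep, Nat.find_spec hrep, fun j' hj' => Nat.find_min hrep hj'⟩
  have hmin : ∀ i' j', i' < j' → j' < m → f j' ≠ f i' := fun i' j' h1 h2 heq =>
    hminP j' h2 ⟨i', h1, heq⟩
  have hi0 : i = 0 := walk_inj hdeg v0 (fun t _ => notstuck t) hmin him heqi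
  subst hi0
  have heqm : f m = f 0 := heqi
  have hinjm : ∀ i j, i < m → j < m → f i = f j → i = j := by
    intro i j hi hj heq
    rcases lt_trichotomy i j with h | h | h
    · exact absurd heq.symm (hmin i j h hj)
    · exact h
    · exact absurd heq (hmin j i h hi)
  have hm1 : m ≠ 1 := by rintro rfl; exact notstuck 0 heqm
  have hm2 : m ≠ 2 := by rintro rfl; exact fw_nb H v0 0 (notstuck 1) heqm
  have hm3 : m ≠ 3 := by
    rintro rfl
    have adj01 : H.Adj (f 0) (f 1) := fw_adj H v0 0 (notstuck 0)
    have adj12 : H.Adj (f 1) (f 2) := fw_adj H v0 1 (notstuck 1)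
    have adj23 : H.Adj (f 2) (f 3) := fw_adj H v0 2 (notstuck 2)
    rw [heqm] at adj23
    exact htri (f 1) (f 0) (f 2) adj01.symm adj12 adj23.symm
  have h4 : 4 ≤ m := by omega
  obtain ⟨m', rfl⟩ : ∃ m', m = m' + 4 := ⟨m - 4, by omega⟩
  set M := m' + 4 with hM
  -- last adjacency
  have adjlast : H.Adj (f (M-1)) (f 0) := by
    have := fw_adj H v0 (M-1) (notstuck (M-1))
    simp only [← hf] at this
    rw [show M - 1 + 1 = M by omega, heqm] at this
    exact this
  -- neighbor classification
  have nbr : ∀ k, k < M → ∀ y, H.Adj (f k) y →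
      (k+1 < M ∧ y = f (k+1)) ∨ (1 ≤ k ∧ y = f (k-1)) ∨
      (k = 0 ∧ y = f (M-1)) ∨ (k = M-1 ∧ y = f 0) := by
    intro k hk y hy
    by_cases hk0 : k = 0
    · subst hk0
      have a1 : H.Adj (f 0) (f 1) := fw_adj H v0 0 (notstuck 0)
      rcases hdeg (f 0) y (f 1) (f (M-1)) hy a1 adjlast.symm with h | h | h
      · exact Or.inl ⟨by omega, h⟩
      · exact Or.inr (Or.inr (Or.inl ⟨rfl, h⟩))
      · exact absurd (hinjm 1 (M-1) (by omega) (by omega) h) (by omega)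
    by_cases hk1 : k = M - 1
    · subst hk1
      have a1 : H.Adj (f (M-1)) (f (M-2)) := by
        have := fw_adj H v0 (M-2) (notstuck (M-2))
        simp only [← hf] at this
        rw [show M - 2 + 1 = M - 1 by omega] at this
        exact this.symm
      rcases hdeg (f (M-1)) y (f (M-2)) (f 0) hy a1 adjlast with h | h | h
      · exact Or.inr (Or.inl ⟨by omega, by rw [h, show M - 1 - 1 = M - 2 by omega]⟩)
      · exact Or.inr (Or.inr (Or.inr ⟨rfl, h⟩))
      · exact absurd (hinjm (M-2) 0 (by omega) (by omega) h) (by omega)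
    · have a1 : H.Adj (f k) (f (k+1)) := fw_adj H v0 k (notstuck k)
      have a2 : H.Adj (f k) (f (k-1)) := by
        have := fw_adj H v0 (k-1) (notstuck (k-1))
        simp only [← hf] at this
        rw [show k - 1 + 1 = k by omega] at this
        exact this.symm
      rcases hdeg (f k) y (f (k+1)) (f (k-1)) hy a1 a2 with h | h | h
      · exact Or.inl ⟨by omega, h⟩
      · exact Or.inr (Or.inl ⟨by omega, h⟩)
      · have := fw_nb H v0 (k-1) (by
          simp only [← hf]
          rw [show k - 1 + 2 = k + 1 by omega, show k - 1 + 1 = k by omega]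
          exact notstuck k)
        simp only [← hf] at this
        rw [show k - 1 + 2 = k + 1 by omega] at this
        exact absurd h this
  -- closure
  set S : Set W := {x | ∃ k < M, f k = x} with hS
  have hcl : ∀ x ∈ S, ∀ y, H.Adj x y → y ∈ S := by
    rintro x ⟨k, hk, rfl⟩ y hy
    rcases nbr k hk y hy with ⟨h1, rfl⟩ | ⟨h1, rfl⟩ | ⟨h1, rfl⟩ | ⟨h1, rfl⟩
    · exact ⟨k+1, h1, rfl⟩
    · exact ⟨k-1, by omega, rfl⟩
    · exact ⟨M-1, by omega, rfl⟩
    · exact ⟨0, by omega, rfl⟩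
  have huniv : ∀ x, x ∈ S := fun x =>
    closure_walk H hcl ((hconn v0 x).some) ⟨0, by omega, rfl⟩
  -- bijection
  set φ : Fin M → W := fun i => f i.val with hφ
  have hbij : Function.Bijective φ := by
    constructor
    · intro i j hij
      exact Fin.ext (hinjm i.val j.val i.isLt j.isLt hij)
    · intro x
      obtain ⟨k, hk, rfl⟩ := huniv x
      exact ⟨⟨k, hk⟩, rfl⟩
  -- Fin arithmetic helpers
  have hsub : ∀ a b : Fin M, (b.val = a.val + 1 ∨ (a.val = M - 1 ∧ b.val = 0)) →
      (b - a).val = 1 := by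
    intro a b h
    have ha := a.isLt
    have hb := b.isLt
    rw [Fin.sub_def]
    simp only
    have h2 : M - a.val + b.val = M + 1 ∨ M - a.val + b.val = 1 := by omega
    rcases h2 with h2 | h2
    · rw [h2, Nat.add_mod_left, Nat.mod_eq_of_lt (by omega)]
    · rw [h2, Nat.mod_eq_of_lt (by omega)]
  have hsub' : ∀ a b : Fin M, (b - a).val = 1 →
      (b.val = a.val + 1 ∨ (a.val = M - 1 ∧ b.val = 0)) := by
    intro a b h
    have ha := a.isLt
    have hb := b.isLt
    rw [Fin.sub_def] at h
    simp only at h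
    rcases Nat.lt_or_ge (M - a.val + b.val) M with hlt | hge
    · rw [Nat.mod_eq_of_lt hlt] at h
      omega
    · rw [Nat.mod_eq_sub_mod hge, Nat.mod_eq_of_lt (by omega)] at h
      omega
  have haux : ∀ a b : Fin M, (b - a).val = 1 → H.Adj (f a.val) (f b.val) := by
    intro a b h
    rcases hsub' a b h with h | ⟨h1, h2⟩
    · rw [h]
      exact fw_adj H v0 a.val (notstuck a.val)
    · rw [h1, h2]
      exact adjlast
  refine ⟨M, by omega, ⟨RelIso.symm ⟨Equiv.ofBijective φ hbij, ?_⟩⟩⟩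
  intro i j
  show H.Adj (φ i) (φ j) ↔ (cycleGraph M).Adj i j
  rw [cycleGraph_adj']
  constructor
  · intro hadj
    rcases nbr i.val i.isLt (φ j) hadj with ⟨h1, heq⟩ | ⟨h1, heq⟩ | ⟨h1, heq⟩ | ⟨h1, heq⟩
    · right
      exact hsub i j (Or.inl (hinjm j.val (i.val+1) j.isLt h1 heq))
    · left
      have hj : j.val = i.val - 1 := hinjm j.val (i.val-1) j.isLt (by omega) heq
      exact hsub j i (Or.inl (by omega))
    · left
      have hj : j.val = M - 1 := hinjm j.val (M-1) j.isLt (by omega) heq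
      exact hsub j i (Or.inr ⟨hj, h1⟩)
    · right
      have hj : j.val = 0 := hinjm j.val 0 j.isLt (by omega) heq
      exact hsub i j (Or.inr ⟨h1, hj⟩)
  · rintro (h | h)
    · exact (haux j i h).symm
    · exact haux i j h


variable {W : Type} {H : SimpleGraph W}

theorem classify [Fintype W] [Nonempty W] (hconn : H.Connected)
    (hdeg : ∀ v a b c : W, H.Adj v a → H.Adj v b → H.Adj v c →
      a = b ∨ a = c ∨ b = c)
    (htri : ∀ a b c : W, H.Adj a b → H.Adj a c → H.Adj b c → False) :
    (∃ n, 4 ≤ n ∧ Nonempty (H ≃g cycleGraph n)) ∨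
    (∃ n, Nonempty (H ≃g pathGraph n)) := by
  by_cases hall : ∀ v : W, ∃ a b, a ≠ b ∧ H.Adj v a ∧ H.Adj v b
  · exact Or.inl (classify_cycle hconn.preconnected hdeg htri hall)
  · push_neg at hall
    obtain ⟨v0, hv0'⟩ := hall
    have hv0 : ∀ a b, H.Adj v0 a → H.Adj v0 b → a = b := by
      intro a b ha hb
      by_contra hne
      exact absurd hb (hv0' a b hne ha)
    exact Or.inr (classify_path hconn.preconnected hdeg v0 hv0)

lemma reachable_induce {V : Type} {G : SimpleGraph V} {s : Set V} :
    ∀ {x y : V} (p : G.Walk x y) (hx : x ∈ s) (hy : y ∈ s),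
      (∀ z ∈ p.support, z ∈ s) →
      (G.induce s).Reachable ⟨x, hx⟩ ⟨y, hy⟩ := by
  intro x y p
  induction p with
  | nil => exact fun _ _ _ => Reachable.refl _
  | @cons u b y h q ih =>
    intro hx hy hs
    have hb : b ∈ s := hs b (by simp)
    have hadj : (G.induce s).Adj ⟨u, hx⟩ ⟨b, hb⟩ := by
      simp only [comap_adj, Function.Embedding.coe_subtype]
      exact h
    exact hadj.reachable.trans (ih hb hy (fun z hz => hs z (by simp [hz])))

lemma supp_connected {V : Type} {G : SimpleGraph V} (c : G.ConnectedComponent) :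
    (G.induce c.supp).Connected := by
  classical
  rw [connected_iff]
  obtain ⟨v, rfl⟩ := c.exists_rep
  refine ⟨?_, ⟨⟨v, (ConnectedComponent.mem_supp_iff _ _).2 rfl⟩⟩⟩
  rintro ⟨x, hx⟩ ⟨y, hy⟩
  have hx' := (ConnectedComponent.mem_supp_iff _ _).1 hx
  have hy' := (ConnectedComponent.mem_supp_iff _ _).1 hy
  obtain ⟨p⟩ : G.Reachable x y := ConnectedComponent.exact (hx'.trans hy'.symm)
  refine reachable_induce p hx hy ?_
  intro z hz
  apply (ConnectedComponent.mem_supp_iff _ _).2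
  rw [← hx']
  exact (ConnectedComponent.sound ⟨p.takeUntil z hz⟩).symm


end StmtAux

/-- Step (1) of the proof of Theorem 1: if a finite claw-free and co-claw-free graph is
disconnected, then each of its connected components is a cycle of length at least 4 or a
path; equivalently, it is triangle-free, has maximum degree at most 2, and has no component
that is a 3-cycle. -/
theorem stmt_11 {V : Type} [Fintype V] (G : SimpleGraph V) [DecidableRel G.Adj]
    (hclaw : ¬ Nonempty (claw ↪g G)) (hcoclaw : ¬ Nonempty (clawᶜ ↪g G))
    (hdisc : ¬ G.Connected) :
    (∀ c : G.ConnectedComponent, CompIsCycleGe4OrPath G c) ∧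
      (G.CliqueFree 3 ∧ (∀ v : V, G.degree v ≤ 2) ∧
       (∀ c : G.ConnectedComponent, ¬ Nonempty (G.induce c.supp ≃g cycleGraph 3))) := by
  classical
  -- triangle-freeness from co-claw-freeness and disconnectedness
  have htriG : ∀ a b c : V, G.Adj a b → G.Adj a c → G.Adj b c → False := by
    intro a b c hab hac hbc
    haveI : Nonempty V := ⟨a⟩
    rw [connected_iff] at hdisc
    push_neg at hdisc
    obtain ⟨u, w, hnr⟩ : ∃ u w, ¬ G.Reachable u w := by
      by_contra h
      push_neg at h
      exact not_isEmpty_of_nonempty V (hdisc (fun u w => h u w))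
    obtain ⟨z, hz⟩ : ∃ z, ¬ G.Reachable a z := by
      by_cases h : G.Reachable a u
      · exact ⟨w, fun hr => hnr (h.symm.trans hr)⟩
      · exact ⟨u, h⟩
    have hza : ¬ G.Adj z a := fun h => hz h.symm.reachable
    have hzb : ¬ G.Adj z b := fun h => hz (hab.reachable.trans h.symm.reachable)
    have hzc : ¬ G.Adj z c := fun h => hz (hac.reachable.trans h.symm.reachable)
    have hzna : z ≠ a := by rintro rfl; exact hz (Reachable.refl z)
    have hznb : z ≠ b := fun h => hz (h ▸ hab.reachable)
    have hznc : z ≠ c := fun h => hz (h ▸ hac.reachable)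
    have haz : ¬ G.Adj a z := fun h => hza h.symm
    have hbz : ¬ G.Adj b z := fun h => hzb h.symm
    have hcz : ¬ G.Adj c z := fun h => hzc h.symm
    refine hcoclaw ⟨⟨⟨Sum.elim (fun _ => z) ![a, b, c], ?_⟩, ?_⟩⟩
    · rintro (x | x) (y | y)
      · intro _; congr; exact Subsingleton.elim _ _
      · intro h
        exfalso
        fin_cases y <;> simp_all
      · intro h
        exfalso
        fin_cases x <;> simp_all
      · intro h
        fin_cases x <;> fin_cases y <;> simp_all [hab.ne, hac.ne, hbc.ne, hab.ne', hac.ne', hbc.ne']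
    · show ∀ {x y}, G.Adj (Sum.elim (fun _ => z) ![a, b, c] x) (Sum.elim (fun _ => z) ![a, b, c] y) ↔ clawᶜ.Adj x y
      rintro (x | x) (y | y) <;> fin_cases x <;> fin_cases y <;>
        simp_all [claw, RelEmbedding.coe_mk, Function.Embedding.coeFn_mk, hab.symm, hac.symm, hbc.symm, hab.ne, hac.ne, hbc.ne,
          hab.ne', hac.ne', hbc.ne', haz, hbz, hcz]
  have hcf : G.CliqueFree 3 := by
    intro s hs
    obtain ⟨a, b, c, hab, hac, hbc, rfl⟩ := is3Clique_iff.1 hs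
    exact htriG a b c hab hac hbc
  -- max degree 2 from claw-freeness and triangle-freeness
  have h3 : ∀ v a b c : V, G.Adj v a → G.Adj v b → G.Adj v c →
      a = b ∨ a = c ∨ b = c := by
    intro v a b c hva hvb hvc
    by_contra h
    push_neg at h
    obtain ⟨hab, hac, hbc⟩ := h
    have nab : ¬ G.Adj a b := fun h' => htriG v a b hva hvb h'
    have nac : ¬ G.Adj a c := fun h' => htriG v a c hva hvc h'
    have nbc : ¬ G.Adj b c := fun h' => htriG v b c hvb hvc h'
    have nba : ¬ G.Adj b a := fun h' => nab h'.symm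
    have nca : ¬ G.Adj c a := fun h' => nac h'.symm
    have ncb : ¬ G.Adj c b := fun h' => nbc h'.symm
    refine hclaw ⟨⟨⟨Sum.elim (fun _ => v) ![a, b, c], ?_⟩, ?_⟩⟩
    · rintro (x | x) (y | y)
      · intro _; congr; exact Subsingleton.elim _ _
      · intro h
        exfalso
        fin_cases y <;> simp_all [hva.ne, hvb.ne, hvc.ne]
      · intro h
        exfalso
        fin_cases x <;> simp_all [hva.ne, hvb.ne, hvc.ne]
      · intro h
        fin_cases x <;> fin_cases y <;> simp_all
    · show ∀ {x y}, G.Adj (Sum.elim (fun _ => v) ![a, b, c] x) (Sum.elim (fun _ => v) ![a, b, c] y) ↔ claw.Adj x y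
      rintro (x | x) (y | y) <;> fin_cases x <;> fin_cases y <;>
        simp_all [claw, RelEmbedding.coe_mk, Function.Embedding.coeFn_mk, hva, hvb, hvc, hva.symm, hvb.symm, hvc.symm, nab, nac, nbc, nba, nca, ncb]
  have hdeg : ∀ v : V, G.degree v ≤ 2 := by
    intro v
    by_contra h
    push_neg at h
    obtain ⟨t, ht, hcard⟩ := Finset.exists_subset_card_eq (show 3 ≤ (G.neighborFinset v).card from h)
    obtain ⟨a, b, c, hab, hac, hbc, rfl⟩ := Finset.card_eq_three.1 hcard
    have hva : G.Adj v a := (mem_neighborFinset _ _ _).1 (ht (by simp))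
    have hvb : G.Adj v b := (mem_neighborFinset _ _ _).1 (ht (by simp))
    have hvc : G.Adj v c := (mem_neighborFinset _ _ _).1 (ht (by simp))
    rcases h3 v a b c hva hvb hvc with h' | h' | h'
    · exact hab h'
    · exact hac h'
    · exact hbc h'
  -- per-component structure
  have hcomp : ∀ c : G.ConnectedComponent, CompIsCycleGe4OrPath G c := by
    intro c
    haveI : Fintype ↥c.supp := Fintype.ofFinite _
    haveI : Nonempty ↥c.supp := by
      obtain ⟨v, rfl⟩ := c.exists_rep
      exact ⟨⟨v, (ConnectedComponent.mem_supp_iff _ _).2 rfl⟩⟩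
    have hconn := StmtAux.supp_connected c
    have hdegI : ∀ v a b c' : ↥c.supp, (G.induce c.supp).Adj v a →
        (G.induce c.supp).Adj v b → (G.induce c.supp).Adj v c' →
        a = b ∨ a = c' ∨ b = c' := by
      rintro ⟨v, hv⟩ ⟨a, ha⟩ ⟨b, hb⟩ ⟨c', hc'⟩ h1 h2 h3'
      simp only [comap_adj, Function.Embedding.coe_subtype] at h1 h2 h3'
      rcases h3 v a b c' h1 h2 h3' with h | h | h
      · exact Or.inl (Subtype.ext h)
      · exact Or.inr (Or.inl (Subtype.ext h))
      · exact Or.inr (Or.inr (Subtype.ext h))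
    have htriI : ∀ a b c' : ↥c.supp, (G.induce c.supp).Adj a b →
        (G.induce c.supp).Adj a c' → (G.induce c.supp).Adj b c' → False := by
      rintro ⟨a, _⟩ ⟨b, _⟩ ⟨c', _⟩ h1 h2 h3'
      simp only [comap_adj, Function.Embedding.coe_subtype] at h1 h2 h3'
      exact htriG a b c' h1 h2 h3'
    exact StmtAux.classify hconn hdegI htriI
  refine ⟨hcomp, hcf, hdeg, ?_⟩
  rintro c ⟨e⟩
  have h01 : (cycleGraph 3).Adj 0 1 := by decide
  have h02 : (cycleGraph 3).Adj 0 2 := by decide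
  have h12 : (cycleGraph 3).Adj 1 2 := by decide
  have a1 := e.symm.map_rel_iff.2 h01
  have a2 := e.symm.map_rel_iff.2 h02
  have a3 := e.symm.map_rel_iff.2 h12
  simp only [comap_adj, Function.Embedding.coe_subtype] at a1 a2 a3
  exact htriG _ _ _ a1 a2 a3
end

section
/- Let G be a finite simple graph that is claw-free and co-claw-free, and suppose G contains an induced subgraph isomorphic to the complement of A_6. Then G has exactly 6 vertices, i.e., G is isomorphic to the complement of A_6. -/
open SimpleGraph

/-- Boolean adjacency table of `A6ᶜ`. -/
def base : Fin 6 → Fin 6 → Bool := fun x y =>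
  (x = 0 && y = 1) || (x = 1 && y = 0) || (x = 0 && y = 2) || (x = 2 && y = 0) ||
  (x = 1 && y = 2) || (x = 2 && y = 1) || (x = 0 && y = 3) || (x = 3 && y = 0) ||
  (x = 1 && y = 4) || (x = 4 && y = 1) || (x = 2 && y = 5) || (x = 5 && y = 2)

set_option linter.unreachableTactic false in
set_option linter.unusedTactic false in
lemma base_iff : ∀ x y : Fin 6, A6ᶜ.Adj x y ↔ base x y = true := by
  intro x y
  fin_cases x <;> fin_cases y <;>
    simp [A6, base, compl_adj, fromRel_adj] <;> decide

/-- `A6ᶜ` extended by a 7th vertex whose neighbourhood in the first 6 vertices is `s`. -/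
def adj7 (s : Fin 6 → Bool) (x y : Fin 7) : Bool :=
  if hx : (x : ℕ) < 6 then
    if hy : (y : ℕ) < 6 then base ⟨x, hx⟩ ⟨y, hy⟩ else s ⟨x, hx⟩
  else
    if hy : (y : ℕ) < 6 then s ⟨y, hy⟩ else false

abbrev W := Fin 7 × Fin 7 × Fin 7 × Fin 7

/-- For each of the 64 possible neighbourhoods of the 7th vertex, an explicit quadruple
of vertices forming an induced claw or co-claw. -/
def witList : List W :=
[(6,0,1,2), (0,1,3,6), (1,0,4,6), (0,2,3,6), (2,0,5,6), (0,1,3,6), (1,0,4,6), (3,1,2,6),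
 (6,0,1,2), (4,0,3,6), (1,0,4,6), (1,2,4,6), (2,0,5,6), (2,1,5,6), (1,0,4,6), (4,0,2,6),
 (6,0,1,2), (0,1,3,6), (3,1,4,6), (0,2,3,6), (2,0,5,6), (0,1,3,6), (2,0,5,6), (3,1,2,6),
 (6,0,1,2), (5,0,3,6), (5,1,4,6), (5,0,1,6), (2,0,5,6), (2,1,5,6), (2,0,5,6), (5,0,1,6),
 (6,0,1,2), (0,1,3,6), (1,0,4,6), (0,2,3,6), (3,2,5,6), (0,1,3,6), (1,0,4,6), (3,1,2,6),
 (6,0,1,2), (4,0,3,6), (1,0,4,6), (1,2,4,6), (4,2,5,6), (4,0,2,6), (1,0,4,6), (4,0,2,6),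
 (6,0,1,2), (0,1,3,6), (3,1,4,6), (0,2,3,6), (3,2,5,6), (0,1,3,6), (3,1,2,6), (3,1,2,6),
 (6,0,1,2), (6,0,4,5), (6,1,3,5), (6,0,4,5), (6,2,3,4), (6,0,4,5), (6,1,3,5), (6,0,4,5)]

def wit (s : Fin 6 → Bool) : W :=
  witList.getD ((cond (s 0) 1 0) + 2 * (cond (s 1) 1 0) + 4 * (cond (s 2) 1 0) +
    8 * (cond (s 3) 1 0) + 16 * (cond (s 4) 1 0) + 32 * (cond (s 5) 1 0)) (0,0,0,0)

/-- `c, a, b, d` form an induced claw (centered at `c`) or co-claw (with `c` the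
isolated vertex and `a b d` the triangle). -/
def Q (s : Fin 6 → Bool) (c a b d : Fin 7) : Prop :=
    (adj7 s c a ∧ adj7 s c b ∧ adj7 s c d ∧
      ¬ adj7 s a b ∧ ¬ adj7 s a d ∧ ¬ adj7 s b d ∧ a ≠ b ∧ a ≠ d ∧ b ≠ d) ∨
    (adj7 s a b ∧ adj7 s a d ∧ adj7 s b d ∧
      ¬ adj7 s c a ∧ ¬ adj7 s c b ∧ ¬ adj7 s c d ∧ c ≠ a ∧ c ≠ b ∧ c ≠ d)

instance (s c a b d) : Decidable (Q s c a b d) := by unfold Q; infer_instance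

set_option maxHeartbeats 1000000 in
lemma key (s : Fin 6 → Bool) : ∃ c a b d : Fin 7, Q s c a b d := by
  have h : ∀ t : Fin 6 → Bool, Q t (wit t).1 (wit t).2.1 (wit t).2.2.1 (wit t).2.2.2 := by
    decide
  exact ⟨_, _, _, _, h s⟩

set_option linter.unreachableTactic false in
set_option linter.unusedTactic false in
set_option linter.unnecessarySeqFocus false in
lemma claw_of {V : Type} (G : SimpleGraph V) (c a b d : V)
    (hca : G.Adj c a) (hcb : G.Adj c b) (hcd : G.Adj c d)
    (hab : ¬ G.Adj a b) (had : ¬ G.Adj a d) (hbd : ¬ G.Adj b d)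
    (nab : a ≠ b) (nad : a ≠ d) (nbd : b ≠ d) : Nonempty (claw ↪g G) := by
  refine ⟨⟨⟨Sum.elim (fun _ => c) ![a, b, d], ?_⟩, ?_⟩⟩
  · rintro (x | x) (y | y) hxy
    · simp [Subsingleton.elim x y]
    · exfalso; fin_cases x <;> fin_cases y <;> simp_all <;>
        first
          | exact G.irrefl (hxy ▸ hca) | exact G.irrefl (hxy ▸ hcb) | exact G.irrefl (hxy ▸ hcd)
    · exfalso; fin_cases x <;> fin_cases y <;> simp_all <;>
        first
          | exact G.irrefl (hxy ▸ hca) | exact G.irrefl (hxy ▸ hcb) | exact G.irrefl (hxy ▸ hcd)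
    · fin_cases x <;> fin_cases y <;> simp_all
  · rintro (x | x) (y | y) <;> fin_cases x <;> fin_cases y <;>
      dsimp only [DFunLike.coe] <;>
      simp_all [claw, G.irrefl, hca.symm, hcb.symm, hcd.symm] <;>
      first
        | exact fun h => hab h | exact fun h => had h | exact fun h => hbd h
        | exact fun h => hab h.symm | exact fun h => had h.symm | exact fun h => hbd h.symm

set_option linter.unreachableTactic false in
set_option linter.unusedTactic false in
set_option linter.unnecessarySeqFocus false in
lemma coclaw_of {V : Type} (G : SimpleGraph V) (c a b d : V)
    (hab : G.Adj a b) (had : G.Adj a d) (hbd : G.Adj b d)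
    (hca : ¬ G.Adj c a) (hcb : ¬ G.Adj c b) (hcd : ¬ G.Adj c d)
    (nca : c ≠ a) (ncb : c ≠ b) (ncd : c ≠ d) : Nonempty (clawᶜ ↪g G) := by
  refine ⟨⟨⟨Sum.elim (fun _ => c) ![a, b, d], ?_⟩, ?_⟩⟩
  · rintro (x | x) (y | y) hxy
    · simp [Subsingleton.elim x y]
    · exfalso; fin_cases x <;> fin_cases y <;> simp_all
    · exfalso; fin_cases x <;> fin_cases y <;> simp_all
    · fin_cases x <;> fin_cases y <;> simp_all <;>
        first
          | exact G.irrefl (by assumption ▸ hab) | skip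
      all_goals first
        | exact absurd (by simp_all : a = b) hab.ne
        | exact absurd (by simp_all : a = d) had.ne
        | exact absurd (by simp_all : b = d) hbd.ne
  · rintro (x | x) (y | y) <;> fin_cases x <;> fin_cases y <;>
      dsimp only [DFunLike.coe] <;>
      simp_all [claw, compl_adj, G.irrefl, hab.symm, had.symm, hbd.symm,
        Ne.symm nca, Ne.symm ncb, Ne.symm ncd, hab.ne, had.ne, hbd.ne,
        hab.ne', had.ne', hbd.ne', fun h => hca (G.adj_symm h),
        fun h => hcb (G.adj_symm h), fun h => hcd (G.adj_symm h)] <;>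
      first
        | exact fun h => hca h.symm | exact fun h => hcb h.symm | exact fun h => hcd h.symm

/-- Step (3) of the proof of Theorem 1: a finite claw-free and co-claw-free graph containing
an induced copy of the complement of `A₆` has exactly 6 vertices, i.e. it is isomorphic to
the complement of `A₆`. -/
theorem stmt_12 {V : Type} [Fintype V] (G : SimpleGraph V)
    (hclaw : ¬ Nonempty (claw ↪g G)) (hcoclaw : ¬ Nonempty (clawᶜ ↪g G))
    (h : Nonempty (A6ᶜ ↪g G)) :
    Fintype.card V = 6 ∧ Nonempty (G ≃g A6ᶜ) := by
  classical
  obtain ⟨f⟩ := h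
  have hsurj : Function.Surjective f := by
    by_contra hns
    rw [Function.Surjective] at hns
    push_neg at hns
    obtain ⟨v, hv⟩ := hns
    set s : Fin 6 → Bool := fun i => decide (G.Adj v (f i)) with hs
    have sdef : ∀ i, s i = true ↔ G.Adj v (f i) := fun i => by simp [hs]
    set g : Fin 7 → V := fun x => if hx : (x : ℕ) < 6 then f ⟨x, hx⟩ else v with hg
    have hginj : Function.Injective g := by
      intro x y hxy
      by_cases hx : (x : ℕ) < 6 <;> by_cases hy : (y : ℕ) < 6 <;>
        simp [hg, hx, hy] at hxy
      · exact Fin.ext hxy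
      · exact absurd hxy (hv _)
      · exact absurd hxy.symm (hv _)
      · omega
    have hadj : ∀ x y, adj7 s x y = true ↔ G.Adj (g x) (g y) := by
      intro x y
      by_cases hx : (x : ℕ) < 6 <;> by_cases hy : (y : ℕ) < 6 <;>
        simp only [adj7, hg, hx, hy, dite_true, dite_false, dif_pos, dif_neg, not_false_iff]
      · rw [← base_iff]
        exact (f.map_adj_iff).symm
      · rw [sdef]
        exact ⟨fun h => h.symm, fun h => h.symm⟩
      · rw [sdef]
      · simp [G.irrefl]
    obtain ⟨c, a, b, d, hQ⟩ := key s
    rcases hQ with ⟨h1, h2, h3, h4, h5, h6, h7, h8, h9⟩ | ⟨h1, h2, h3, h4, h5, h6, h7, h8, h9⟩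
    · exact hclaw (claw_of G (g c) (g a) (g b) (g d)
        ((hadj _ _).1 h1) ((hadj _ _).1 h2) ((hadj _ _).1 h3)
        (fun hh => h4 ((hadj _ _).2 hh)) (fun hh => h5 ((hadj _ _).2 hh))
        (fun hh => h6 ((hadj _ _).2 hh)) (hginj.ne h7) (hginj.ne h8) (hginj.ne h9))
    · exact hcoclaw (coclaw_of G (g c) (g a) (g b) (g d)
        ((hadj _ _).1 h1) ((hadj _ _).1 h2) ((hadj _ _).1 h3)
        (fun hh => h4 ((hadj _ _).2 hh)) (fun hh => h5 ((hadj _ _).2 hh))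
        (fun hh => h6 ((hadj _ _).2 hh)) (hginj.ne h7) (hginj.ne h8) (hginj.ne h9))
  have hc : Fintype.card V = 6 := by
    rw [← Fintype.card_congr (Equiv.ofBijective f ⟨f.injective, hsurj⟩), Fintype.card_fin]
  refine ⟨hc, ⟨SimpleGraph.Iso.symm ⟨Equiv.ofBijective f ⟨f.injective, hsurj⟩, ?_⟩⟩⟩
  intro x y
  exact f.map_adj_iff (v := x) (w := y)
end

section
/- Let G be a finite simple graph that is claw-free and co-claw-free and such that both G and its complement are connected. If G contains an induced path on 6 vertices, then G is a path (on at least 6 vertices) or a cycle (on at least 7 vertices). -/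
open SimpleGraph

section helpers

variable {V : Type} {G : SimpleGraph V}

lemma clawAdj1 (a b : Fin 1) : ¬ claw.Adj (Sum.inl a) (Sum.inl b) := by
  simp [claw, completeBipartiteGraph]

lemma clawAdj2 (a : Fin 1) (b : Fin 3) : claw.Adj (Sum.inl a) (Sum.inr b) := by
  simp [claw, completeBipartiteGraph]

lemma clawAdj3 (a : Fin 3) (b : Fin 1) : claw.Adj (Sum.inr a) (Sum.inl b) := by
  simp [claw, completeBipartiteGraph]

lemma clawAdj4 (a b : Fin 3) : ¬ claw.Adj (Sum.inr a) (Sum.inr b) := by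
  simp [claw, completeBipartiteGraph]

lemma noClaw (hclaw : ¬ Nonempty (claw ↪g G)) {t x y z : V}
    (htx : G.Adj t x) (hty : G.Adj t y) (htz : G.Adj t z)
    (hxy : ¬ G.Adj x y) (hxz : ¬ G.Adj x z) (hyz : ¬ G.Adj y z)
    (hxy' : x ≠ y) (hxz' : x ≠ z) (hyz' : y ≠ z) : False := by
  have h1 : t ≠ x := G.ne_of_adj htx
  have h2 : t ≠ y := G.ne_of_adj hty
  have h3 : t ≠ z := G.ne_of_adj htz
  apply hclaw
  refine ⟨⟨⟨Sum.elim (fun _ => t) ![x, y, z], ?_⟩, ?_⟩⟩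
  · rintro (a | a) (b | b) h <;> simp only [Sum.elim_inl, Sum.elim_inr] at h
    · congr 1; exact Subsingleton.elim a b
    · exfalso; fin_cases b <;> simp_all
    · exfalso; fin_cases a <;> simp_all
    · congr 1; fin_cases a <;> fin_cases b <;> simp_all
  · intro a b
    rcases a with a | a <;> rcases b with b | b <;>
      simp -failIfUnchanged only [Function.Embedding.coeFn_mk, Sum.elim_inl, Sum.elim_inr]
    · exact iff_of_false (G.irrefl) (clawAdj1 a b)
    · refine iff_of_true ?_ (clawAdj2 a b)
      fin_cases b
      · exact htx
      · exact hty
      · exact htz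
    · refine iff_of_true ?_ (clawAdj3 a b)
      fin_cases a
      · exact htx.symm
      · exact hty.symm
      · exact htz.symm
    · refine iff_of_false ?_ (clawAdj4 a b)
      fin_cases a <;> fin_cases b <;>
        simp only [Matrix.cons_val_zero, Matrix.cons_val_one, Matrix.head_cons,
          Matrix.cons_val_two, Matrix.tail_cons] <;>
        first
          | exact G.irrefl
          | exact hxy
          | exact hxz
          | exact hyz
          | exact fun h => hxy h.symm
          | exact fun h => hxz h.symm
          | exact fun h => hyz h.symm

lemma noCoclaw (hcoclaw : ¬ Nonempty (clawᶜ ↪g G)) {a b c x : V}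
    (hab : G.Adj a b) (hbc : G.Adj b c) (hac : G.Adj a c)
    (hxa : ¬ G.Adj x a) (hxb : ¬ G.Adj x b) (hxc : ¬ G.Adj x c)
    (hxa' : x ≠ a) (hxb' : x ≠ b) (hxc' : x ≠ c) : False := by
  have h1 : a ≠ b := G.ne_of_adj hab
  have h2 : b ≠ c := G.ne_of_adj hbc
  have h3 : a ≠ c := G.ne_of_adj hac
  apply hcoclaw
  refine ⟨⟨⟨Sum.elim (fun _ => x) ![a, b, c], ?_⟩, ?_⟩⟩
  · rintro (i | i) (j | j) h <;> simp only [Sum.elim_inl, Sum.elim_inr] at h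
    · congr 1; exact Subsingleton.elim i j
    · exfalso; fin_cases j <;> simp_all
    · exfalso; fin_cases i <;> simp_all
    · congr 1; fin_cases i <;> fin_cases j <;> simp_all
  · intro i j
    rcases i with i | i <;> rcases j with j | j <;>
      simp only [Function.Embedding.coeFn_mk, Sum.elim_inl, Sum.elim_inr, compl_adj]
    · refine iff_of_false (G.irrefl) ?_
      rintro ⟨hne, -⟩; exact hne (by rw [Subsingleton.elim i j])
    · refine iff_of_false ?_ ?_
      · fin_cases j
        · exact hxa
        · exact hxb
        · exact hxc
      · rintro ⟨-, hn⟩; exact hn (clawAdj2 i j)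
    · refine iff_of_false ?_ ?_
      · fin_cases i
        · exact fun h => hxa h.symm
        · exact fun h => hxb h.symm
        · exact fun h => hxc h.symm
      · rintro ⟨-, hn⟩; exact hn (clawAdj3 i j)
    · constructor
      · intro h
        refine ⟨?_, fun hcl => clawAdj4 i j hcl⟩
        intro he
        injection he with he'
        rw [he'] at h
        exact G.irrefl h
      · rintro ⟨hne, -⟩
        have hij : i ≠ j := fun he => hne (by rw [he])
        fin_cases i <;> fin_cases j <;>
          simp only [Matrix.cons_val_zero, Matrix.cons_val_one, Matrix.head_cons,
            Matrix.cons_val_two, Matrix.tail_cons] <;>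
          first
            | exact absurd rfl hij
            | exact hab
            | exact hac
            | exact hbc
            | exact hab.symm
            | exact hac.symm
            | exact hbc.symm

section pathfacts

variable {V : Type} {G : SimpleGraph V} {v : ℕ → V}

/-- no vertex is adjacent to two consecutive vertices of an induced `P6` -/
lemma lemE (hclaw : ¬ Nonempty (claw ↪g G)) (hcoclaw : ¬ Nonempty (clawᶜ ↪g G))
    (hvne : ∀ i j, i < 6 → j < 6 → i ≠ j → v i ≠ v j)
    (hva : ∀ i j, i < 6 → j < 6 → i + 1 = j → G.Adj (v i) (v j))
    (hvn : ∀ i j, i < 6 → j < 6 → i + 1 ≠ j → j + 1 ≠ i → i ≠ j → ¬ G.Adj (v i) (v j))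
    {t : V} {j : ℕ} (hj : j < 5) (h1 : G.Adj t (v j)) (h2 : G.Adj t (v (j + 1))) :
    False := by
  -- t is not a path vertex
  have htne : ∀ k, k < 6 → t ≠ v k := by
    intro k hk he
    subst he
    have c1 : k + 1 = j ∨ j + 1 = k := by
      by_contra hc
      push_neg at hc
      rcases eq_or_ne k j with rfl | hkj
      · exact G.irrefl h1
      · exact hvn k j hk (by omega) hc.1 hc.2 hkj h1
    have c2 : k + 1 = j + 1 ∨ (j + 1) + 1 = k := by
      by_contra hc
      push_neg at hc
      rcases eq_or_ne k (j + 1) with rfl | hkj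
      · exact G.irrefl h2
      · exact hvn k (j + 1) hk (by omega) hc.1 hc.2 hkj h2
    omega
  -- helper producing adjacency to t from a triangle (t, v i1, v i2) and a far vertex v k
  have coStep : ∀ i1 i2 k, i1 < 6 → i2 < 6 → k < 6 →
      G.Adj t (v i1) → G.Adj t (v i2) → G.Adj (v i1) (v i2) →
      (k + 1 ≠ i1 ∧ i1 + 1 ≠ k ∧ k ≠ i1) → (k + 1 ≠ i2 ∧ i2 + 1 ≠ k ∧ k ≠ i2) →
      G.Adj (v k) t := by
    intro i1 i2 k h1' h2' hk' ha1 ha2 ha12 hf1 hf2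
    by_contra hxt
    exact noCoclaw hcoclaw ha1 ha12 ha2
      hxt (hvn k i1 hk' h1' hf1.1 hf1.2.1 hf1.2.2) (hvn k i2 hk' h2' hf2.1 hf2.2.1 hf2.2.2)
      (fun he => htne k hk' he.symm) (hvne k i1 hk' h1' hf1.2.2) (hvne k i2 hk' h2' hf2.2.2)
  have hadj01 : G.Adj (v j) (v (j + 1)) := hva j (j + 1) (by omega) (by omega) rfl
  interval_cases j
  · -- t ~ v0, v1
    have h3 : G.Adj (v 3) t := coStep 0 1 3 (by omega) (by omega) (by omega) h1 h2 hadj01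
      (by omega) (by omega)
    have h5 : G.Adj (v 5) t := coStep 0 1 5 (by omega) (by omega) (by omega) h1 h2 hadj01
      (by omega) (by omega)
    exact noClaw hclaw h1 h3.symm h5.symm
      (hvn 0 3 (by omega) (by omega) (by omega) (by omega) (by omega))
      (hvn 0 5 (by omega) (by omega) (by omega) (by omega) (by omega))
      (hvn 3 5 (by omega) (by omega) (by omega) (by omega) (by omega))
      (hvne 0 3 (by omega) (by omega) (by omega))
      (hvne 0 5 (by omega) (by omega) (by omega))
      (hvne 3 5 (by omega) (by omega) (by omega))
  · -- t ~ v1, v2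
    have h4 : G.Adj (v 4) t := coStep 1 2 4 (by omega) (by omega) (by omega) h1 h2 hadj01
      (by omega) (by omega)
    have h5 : G.Adj (v 5) t := coStep 1 2 5 (by omega) (by omega) (by omega) h1 h2 hadj01
      (by omega) (by omega)
    have h0 : G.Adj (v 0) t := coStep 4 5 0 (by omega) (by omega) (by omega) h4.symm h5.symm
      (hva 4 5 (by omega) (by omega) rfl) (by omega) (by omega)
    exact noClaw hclaw h0.symm h2 h4.symm
      (hvn 0 2 (by omega) (by omega) (by omega) (by omega) (by omega))
      (hvn 0 4 (by omega) (by omega) (by omega) (by omega) (by omega))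
      (hvn 2 4 (by omega) (by omega) (by omega) (by omega) (by omega))
      (hvne 0 2 (by omega) (by omega) (by omega))
      (hvne 0 4 (by omega) (by omega) (by omega))
      (hvne 2 4 (by omega) (by omega) (by omega))
  · -- t ~ v2, v3
    have h0 : G.Adj (v 0) t := coStep 2 3 0 (by omega) (by omega) (by omega) h1 h2 hadj01
      (by omega) (by omega)
    have h5 : G.Adj (v 5) t := coStep 2 3 5 (by omega) (by omega) (by omega) h1 h2 hadj01
      (by omega) (by omega)
    exact noClaw hclaw h0.symm h1 h5.symm
      (hvn 0 2 (by omega) (by omega) (by omega) (by omega) (by omega))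
      (hvn 0 5 (by omega) (by omega) (by omega) (by omega) (by omega))
      (hvn 2 5 (by omega) (by omega) (by omega) (by omega) (by omega))
      (hvne 0 2 (by omega) (by omega) (by omega))
      (hvne 0 5 (by omega) (by omega) (by omega))
      (hvne 2 5 (by omega) (by omega) (by omega))
  · -- t ~ v3, v4
    have h0 : G.Adj (v 0) t := coStep 3 4 0 (by omega) (by omega) (by omega) h1 h2 hadj01
      (by omega) (by omega)
    have h1' : G.Adj (v 1) t := coStep 3 4 1 (by omega) (by omega) (by omega) h1 h2 hadj01
      (by omega) (by omega)
    have h5 : G.Adj (v 5) t := coStep 0 1 5 (by omega) (by omega) (by omega) h0.symm h1'.symm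
      (hva 0 1 (by omega) (by omega) rfl) (by omega) (by omega)
    exact noClaw hclaw h1'.symm h1 h5.symm
      (hvn 1 3 (by omega) (by omega) (by omega) (by omega) (by omega))
      (hvn 1 5 (by omega) (by omega) (by omega) (by omega) (by omega))
      (hvn 3 5 (by omega) (by omega) (by omega) (by omega) (by omega))
      (hvne 1 3 (by omega) (by omega) (by omega))
      (hvne 1 5 (by omega) (by omega) (by omega))
      (hvne 3 5 (by omega) (by omega) (by omega))
  · -- t ~ v4, v5
    have h0 : G.Adj (v 0) t := coStep 4 5 0 (by omega) (by omega) (by omega) h1 h2 hadj01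
      (by omega) (by omega)
    have h2' : G.Adj (v 2) t := coStep 4 5 2 (by omega) (by omega) (by omega) h1 h2 hadj01
      (by omega) (by omega)
    exact noClaw hclaw h0.symm h2'.symm h1
      (hvn 0 2 (by omega) (by omega) (by omega) (by omega) (by omega))
      (hvn 0 4 (by omega) (by omega) (by omega) (by omega) (by omega))
      (hvn 2 4 (by omega) (by omega) (by omega) (by omega) (by omega))
      (hvne 0 2 (by omega) (by omega) (by omega))
      (hvne 0 4 (by omega) (by omega) (by omega))
      (hvne 2 4 (by omega) (by omega) (by omega))

end pathfacts
section trifree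

variable {V : Type} {G : SimpleGraph V} {v : ℕ → V}

lemma pairNon (hclaw : ¬ Nonempty (claw ↪g G)) (hcoclaw : ¬ Nonempty (clawᶜ ↪g G))
    (hvne : ∀ i j, i < 6 → j < 6 → i ≠ j → v i ≠ v j)
    (hva : ∀ i j, i < 6 → j < 6 → i + 1 = j → G.Adj (v i) (v j))
    (hvn : ∀ i j, i < 6 → j < 6 → i + 1 ≠ j → j + 1 ≠ i → i ≠ j → ¬ G.Adj (v i) (v j))
    {t : V} {i j : ℕ} (hi : i < 6) (hj : j < 6) (hij : i ≠ j)
    (h1 : G.Adj t (v i)) (h2 : G.Adj t (v j)) : ¬ G.Adj (v i) (v j) := by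
  by_cases hc1 : i + 1 = j
  · exact absurd h2 (by
      exfalso
      exact lemE hclaw hcoclaw hvne hva hvn (j := i) (by omega) h1 (by rw [hc1]; exact h2))
  · by_cases hc2 : j + 1 = i
    · exfalso
      exact lemE hclaw hcoclaw hvne hva hvn (j := j) (by omega) h2 (by rw [hc2]; exact h1)
    · exact hvn i j hi hj hc1 hc2 hij

lemma lemF (hclaw : ¬ Nonempty (claw ↪g G)) (hcoclaw : ¬ Nonempty (clawᶜ ↪g G))
    (hvne : ∀ i j, i < 6 → j < 6 → i ≠ j → v i ≠ v j)
    (hva : ∀ i j, i < 6 → j < 6 → i + 1 = j → G.Adj (v i) (v j))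
    (hvn : ∀ i j, i < 6 → j < 6 → i + 1 ≠ j → j + 1 ≠ i → i ≠ j → ¬ G.Adj (v i) (v j))
    {t : V} {i j k : ℕ} (hi : i < 6) (hj : j < 6) (hk : k < 6)
    (hij : i ≠ j) (hik : i ≠ k) (hjk : j ≠ k)
    (h1 : G.Adj t (v i)) (h2 : G.Adj t (v j)) (h3 : G.Adj t (v k)) : False :=
  noClaw hclaw h1 h2 h3
    (pairNon hclaw hcoclaw hvne hva hvn hi hj hij h1 h2)
    (pairNon hclaw hcoclaw hvne hva hvn hi hk hik h1 h3)
    (pairNon hclaw hcoclaw hvne hva hvn hj hk hjk h2 h3)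
    (hvne i j hi hj hij) (hvne i k hi hk hik) (hvne j k hj hk hjk)

lemma trifree (hclaw : ¬ Nonempty (claw ↪g G)) (hcoclaw : ¬ Nonempty (clawᶜ ↪g G))
    (hvne : ∀ i j, i < 6 → j < 6 → i ≠ j → v i ≠ v j)
    (hva : ∀ i j, i < 6 → j < 6 → i + 1 = j → G.Adj (v i) (v j))
    (hvn : ∀ i j, i < 6 → j < 6 → i + 1 ≠ j → j + 1 ≠ i → i ≠ j → ¬ G.Adj (v i) (v j))
    {a b c : V} (hab : G.Adj a b) (hbc : G.Adj b c) (hac : G.Adj a c) : False := by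
  classical
  -- two triangle vertices on the path is impossible
  have twoOn : ∀ i j (z : V), i < 6 → j < 6 → G.Adj (v i) (v j) →
      G.Adj (v i) z → G.Adj (v j) z → False := by
    intro i j z hi hj hij hiz hjz
    have hne : i ≠ j := fun he => G.irrefl (he ▸ hij)
    have hcons : i + 1 = j ∨ j + 1 = i := by
      by_contra hc
      push_neg at hc
      exact hvn i j hi hj hc.1 hc.2 hne hij
    rcases hcons with h | h
    · exact lemE hclaw hcoclaw hvne hva hvn (j := i) (by omega) hiz.symm
        (by rw [h]; exact hjz.symm)
    · exact lemE hclaw hcoclaw hvne hva hvn (j := j) (by omega) hjz.symm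
        (by rw [h]; exact hiz.symm)
  -- one triangle vertex on the path
  have oneOn : ∀ m (b' c' : V), m < 6 →
      (∀ i, i < 6 → b' ≠ v i) → (∀ i, i < 6 → c' ≠ v i) →
      G.Adj (v m) b' → G.Adj (v m) c' → G.Adj b' c' → False := by
    intro m b' c' hm hbP hcP hmb hmc hbc'
    have hfar : ∃ j1 j2 j3, j1 < 6 ∧ j2 < 6 ∧ j3 < 6 ∧ j1 ≠ j2 ∧ j1 ≠ j3 ∧ j2 ≠ j3 ∧
        (j1 + 1 ≠ m ∧ m + 1 ≠ j1 ∧ j1 ≠ m) ∧ (j2 + 1 ≠ m ∧ m + 1 ≠ j2 ∧ j2 ≠ m) ∧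
        (j3 + 1 ≠ m ∧ m + 1 ≠ j3 ∧ j3 ≠ m) := by
      interval_cases m
      · exact ⟨2, 3, 4, by omega⟩
      · exact ⟨3, 4, 5, by omega⟩
      · exact ⟨0, 4, 5, by omega⟩
      · exact ⟨0, 1, 5, by omega⟩
      · exact ⟨0, 1, 2, by omega⟩
      · exact ⟨1, 2, 3, by omega⟩
    obtain ⟨j1, j2, j3, hj1, hj2, hj3, h12, h13, h23, hf1, hf2, hf3⟩ := hfar
    have hgo : ∀ k, k < 6 → (k + 1 ≠ m ∧ m + 1 ≠ k ∧ k ≠ m) →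
        G.Adj b' (v k) ∨ G.Adj c' (v k) := by
      intro k hk hfk
      by_contra hcon
      push_neg at hcon
      exact noCoclaw hcoclaw hmb hbc' hmc
        (hvn k m hk hm hfk.1 hfk.2.1 hfk.2.2)
        (fun h => hcon.1 h.symm) (fun h => hcon.2 h.symm)
        (hvne k m hk hm hfk.2.2) (fun h => hbP k hk h.symm) (fun h => hcP k hk h.symm)
    have e1 := hgo j1 hj1 hf1
    have e2 := hgo j2 hj2 hf2
    have e3 := hgo j3 hj3 hf3
    have FF := fun {t : V} {i j k : ℕ} => lemF (t := t) (i := i) (j := j) (k := k)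
      hclaw hcoclaw hvne hva hvn
    rcases e1 with e1 | e1 <;> rcases e2 with e2 | e2 <;> rcases e3 with e3 | e3
    · exact FF hj1 hj2 hm h12 hf1.2.2 hf2.2.2 e1 e2 hmb.symm
    · exact FF hj1 hj2 hm h12 hf1.2.2 hf2.2.2 e1 e2 hmb.symm
    · exact FF hj1 hj3 hm h13 hf1.2.2 hf3.2.2 e1 e3 hmb.symm
    · exact FF hj2 hj3 hm h23 hf2.2.2 hf3.2.2 e2 e3 hmc.symm
    · exact FF hj2 hj3 hm h23 hf2.2.2 hf3.2.2 e2 e3 hmb.symm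
    · exact FF hj1 hj3 hm h13 hf1.2.2 hf3.2.2 e1 e3 hmc.symm
    · exact FF hj1 hj2 hm h12 hf1.2.2 hf2.2.2 e1 e2 hmc.symm
    · exact FF hj1 hj2 hm h12 hf1.2.2 hf2.2.2 e1 e2 hmc.symm
  -- no triangle vertex on the path
  have zeroOn : ∀ (a' b' c' : V), G.Adj a' b' → G.Adj b' c' → G.Adj a' c' →
      (∀ i, i < 6 → a' ≠ v i) → (∀ i, i < 6 → b' ≠ v i) → (∀ i, i < 6 → c' ≠ v i) →
      False := by
    intro a' b' c' hab' hbc' hac' haP hbP hcP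
    set S : V → Finset (Fin 6) := fun t => Finset.univ.filter (fun i => G.Adj t (v i.val))
      with hS
    have hmemS : ∀ (t : V) (i : Fin 6), i ∈ S t ↔ G.Adj t (v i.val) := by
      intro t i; simp [hS]
    have hcard : ∀ t : V, (S t).card ≤ 2 := by
      intro t
      by_contra hgt
      push_neg at hgt
      obtain ⟨x, y, z, hx, hy, hz, hxy, hxz, hyz⟩ := Finset.two_lt_card_iff.mp hgt
      exact lemF hclaw hcoclaw hvne hva hvn x.isLt y.isLt z.isLt
        (fun h => hxy (Fin.ext h)) (fun h => hxz (Fin.ext h)) (fun h => hyz (Fin.ext h))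
        ((hmemS t x).mp hx) ((hmemS t y).mp hy) ((hmemS t z).mp hz)
    have hcov : ∀ i : Fin 6, i ∈ S a' ∪ (S b' ∪ S c') := by
      intro i
      by_contra hni
      simp only [Finset.mem_union, hmemS, not_or] at hni
      exact noCoclaw hcoclaw hab' hbc' hac'
        (fun h => hni.1 h.symm) (fun h => hni.2.1 h.symm) (fun h => hni.2.2 h.symm)
        (fun h => haP i.val i.isLt h.symm) (fun h => hbP i.val i.isLt h.symm)
        (fun h => hcP i.val i.isLt h.symm)
    have hsub : (Finset.univ : Finset (Fin 6)) ⊆ S a' ∪ (S b' ∪ S c') :=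
      fun i _ => hcov i
    have h6 : 6 ≤ (S a' ∪ (S b' ∪ S c')).card := by
      have := Finset.card_le_card hsub
      simpa using this
    have hu1 := Finset.card_union_add_card_inter (S a') (S b' ∪ S c')
    have hu2 := Finset.card_union_add_card_inter (S b') (S c')
    have ha2 : (S a').card ≤ 2 := hcard a'
    have hb2 : (S b').card ≤ 2 := hcard b'
    have hc2 : (S c').card ≤ 2 := hcard c'
    have hint : ((S a') ∩ (S b' ∪ S c')).card = 0 := by omega
    have ha2' : 2 ≤ (S a').card := by omega
    have hempty : (S a') ∩ (S b' ∪ S c') = ∅ := Finset.card_eq_zero.mp hint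
    obtain ⟨x, hx, y, hy, hxy⟩ := Finset.one_lt_card.mp (by omega : 1 < (S a').card)
    have hax := (hmemS a' x).mp hx
    have hay := (hmemS a' y).mp hy
    have hnb : ∀ z : Fin 6, z ∈ S a' → ¬ G.Adj (v z.val) b' := by
      intro z hz hadj
      have : z ∈ (S a') ∩ (S b' ∪ S c') :=
        Finset.mem_inter.mpr ⟨hz, Finset.mem_union_left _ ((hmemS b' z).mpr hadj.symm)⟩
      rw [hempty] at this
      exact absurd this (Finset.notMem_empty z)
    exact noClaw hclaw hax hay hab'
      (pairNon hclaw hcoclaw hvne hva hvn x.isLt y.isLt (fun h => hxy (Fin.ext h)) hax hay)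
      (hnb x hx) (hnb y hy)
      (hvne x.val y.val x.isLt y.isLt (fun h => hxy (Fin.ext h)))
      (fun h => hbP x.val x.isLt h.symm) (fun h => hbP y.val y.isLt h.symm)
  -- main case analysis
  by_cases ha : ∃ i, i < 6 ∧ a = v i <;> by_cases hb : ∃ i, i < 6 ∧ b = v i <;>
    by_cases hc : ∃ i, i < 6 ∧ c = v i
  · obtain ⟨i, hi, rfl⟩ := ha; obtain ⟨j, hj, rfl⟩ := hb
    exact twoOn i j c hi hj hab hac hbc
  · obtain ⟨i, hi, rfl⟩ := ha; obtain ⟨j, hj, rfl⟩ := hb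
    exact twoOn i j c hi hj hab hac hbc
  · obtain ⟨i, hi, rfl⟩ := ha; obtain ⟨k, hk, rfl⟩ := hc
    exact twoOn i k b hi hk hac hab hbc.symm
  · obtain ⟨i, hi, rfl⟩ := ha
    push_neg at hb hc
    exact oneOn i b c hi (fun k hk => hb k hk ∘ Eq.symm ∘ Eq.symm)
      (fun k hk => hc k hk ∘ Eq.symm ∘ Eq.symm) hab hac hbc
  · obtain ⟨j, hj, rfl⟩ := hb; obtain ⟨k, hk, rfl⟩ := hc
    exact twoOn j k a hj hk hbc hab.symm hac.symm
  · obtain ⟨j, hj, rfl⟩ := hb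
    push_neg at ha hc
    exact oneOn j a c hj (fun k hk => ha k hk ∘ Eq.symm ∘ Eq.symm)
      (fun k hk => hc k hk ∘ Eq.symm ∘ Eq.symm) hab.symm hbc hac
  · obtain ⟨k, hk, rfl⟩ := hc
    push_neg at ha hb
    exact oneOn k a b hk (fun i hi => ha i hi ∘ Eq.symm ∘ Eq.symm)
      (fun i hi => hb i hi ∘ Eq.symm ∘ Eq.symm) hac.symm hbc.symm hab
  · push_neg at ha hb hc
    exact zeroOn a b c hab hbc hac (fun i hi => ha i hi ∘ Eq.symm ∘ Eq.symm)
      (fun i hi => hb i hi ∘ Eq.symm ∘ Eq.symm) (fun i hi => hc i hi ∘ Eq.symm ∘ Eq.symm)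

end trifree
section structurepart

variable {V : Type} {G : SimpleGraph V}

lemma getVert_inj {u w : V} {p : G.Walk u w} (hp : p.IsPath) :
    ∀ i j, i ≤ p.length → j ≤ p.length → p.getVert i = p.getVert j → i = j := by
  induction p with
  | nil => intro i j hi hj _; simp only [SimpleGraph.Walk.length_nil, Nat.le_zero] at hi hj; omega
  | cons h q ih =>
    rw [SimpleGraph.Walk.cons_isPath_iff] at hp
    intro i j hi hj he
    rw [SimpleGraph.Walk.length_cons] at hi hj
    match i, j with
    | 0, 0 => rfl
    | 0, j + 1 =>
      exfalso
      rw [SimpleGraph.Walk.getVert_zero, SimpleGraph.Walk.getVert_cons_succ] at he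
      exact hp.2 (SimpleGraph.Walk.mem_support_iff_exists_getVert.mpr ⟨j, he.symm, by omega⟩)
    | i + 1, 0 =>
      exfalso
      rw [SimpleGraph.Walk.getVert_zero, SimpleGraph.Walk.getVert_cons_succ] at he
      exact hp.2 (SimpleGraph.Walk.mem_support_iff_exists_getVert.mpr ⟨i, he, by omega⟩)
    | i + 1, j + 1 =>
      rw [SimpleGraph.Walk.getVert_cons_succ, SimpleGraph.Walk.getVert_cons_succ] at he
      have := ih hp.1 i j (by omega) (by omega) he
      omega

lemma no_P6_C6 (m : ℕ) (hm : m = 6) (e : pathGraph 6 ↪g cycleGraph m) : False := by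
  subst hm
  have hbij : Function.Bijective e := (Finite.injective_iff_bijective).mp e.injective
  have hne : ∀ k : Fin 6, k + 1 ≠ k - 1 := by decide
  have hA1 : ∀ k : Fin 6, (cycleGraph 6).Adj k (k + 1) := by decide
  have hA2 : ∀ k : Fin 6, (cycleGraph 6).Adj k (k - 1) := by decide
  have h1 : (cycleGraph 6).Adj (e 0) (e 0 + 1) := hA1 _
  have h2 : (cycleGraph 6).Adj (e 0) (e 0 - 1) := hA2 _
  obtain ⟨j1, hj1⟩ := hbij.2 (e 0 + 1)
  obtain ⟨j2, hj2⟩ := hbij.2 (e 0 - 1)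
  rw [← hj1] at h1
  rw [← hj2] at h2
  have p1 : (pathGraph 6).Adj 0 j1 := e.map_rel_iff.mp h1
  have p2 : (pathGraph 6).Adj 0 j2 := e.map_rel_iff.mp h2
  rw [pathGraph_adj] at p1 p2
  have : j1 = j2 := by
    apply Fin.ext
    simp only [Fin.val_zero] at p1 p2
    omega
  rw [this, hj2] at hj1
  exact hne (e 0) hj1.symm

end structurepart

lemma fin_sub_val {N : ℕ} (a b : Fin N) :
    ((b - a).val = 1) ↔ (b.val = a.val + 1 ∨ (b.val = 0 ∧ a.val = N - 1 ∧ 2 ≤ N)) := by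
  have ha := a.isLt
  have hb := b.isLt
  have hvalsub : (b - a).val = ((N - a.val) + b.val) % N := rfl
  rw [hvalsub]
  have key : ∀ s, s < 2 * N → s % N = s ∨ (s % N = s - N ∧ N ≤ s) := by
    intro s hs
    by_cases h : s < N
    · exact Or.inl (Nat.mod_eq_of_lt h)
    · refine Or.inr ⟨?_, by omega⟩
      rw [Nat.mod_eq_sub_mod (le_of_not_gt h)]
      exact Nat.mod_eq_of_lt (by omega)
  rcases key ((N - a.val) + b.val) (by omega) with h | h <;> omega


/-- Step (2) of the proof of Theorem 1: a finite claw-free and co-claw-free graph, connected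
with connected complement, containing an induced path on 6 vertices, is a path on at least 6
vertices or a cycle on at least 7 vertices. -/
theorem stmt_13 {V : Type} [Fintype V] (G : SimpleGraph V)
    (hclaw : ¬ Nonempty (claw ↪g G)) (hcoclaw : ¬ Nonempty (clawᶜ ↪g G))
    (hconn : G.Connected) (hconnc : Gᶜ.Connected)
    (hpath : Nonempty (pathGraph 6 ↪g G)) :
    (∃ n, 6 ≤ n ∧ Nonempty (G ≃g pathGraph n)) ∨
    (∃ n, 7 ≤ n ∧ Nonempty (G ≃g cycleGraph n)) := by
  classical
  obtain ⟨f⟩ := hpath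
  have h6 : ∀ i : ℕ, i % 6 < 6 := fun i => Nat.mod_lt _ (by omega)
  set vv : ℕ → V := fun i => f ⟨i % 6, h6 i⟩ with hvv
  have hvne : ∀ i j, i < 6 → j < 6 → i ≠ j → vv i ≠ vv j := by
    intro i j hi hj hij he
    rw [hvv] at he
    simp only at he
    have := f.injective he
    rw [Fin.mk.injEq, Nat.mod_eq_of_lt hi, Nat.mod_eq_of_lt hj] at this
    exact hij this
  have hva : ∀ i j, i < 6 → j < 6 → i + 1 = j → G.Adj (vv i) (vv j) := by
    intro i j hi hj hij
    rw [hvv]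
    simp only
    apply f.map_rel_iff.mpr
    rw [pathGraph_adj]
    simp only [Nat.mod_eq_of_lt hi, Nat.mod_eq_of_lt hj]
    exact Or.inl hij
  have hvn : ∀ i j, i < 6 → j < 6 → i + 1 ≠ j → j + 1 ≠ i → i ≠ j → ¬ G.Adj (vv i) (vv j) := by
    intro i j hi hj h1 h2 hij hadj
    rw [hvv] at hadj
    simp only at hadj
    have := f.map_rel_iff.mp hadj
    rw [pathGraph_adj] at this
    simp only [Nat.mod_eq_of_lt hi, Nat.mod_eq_of_lt hj] at this
    omega
  have htri : ∀ {a b c : V}, G.Adj a b → G.Adj b c → G.Adj a c → False :=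
    fun hab hbc hac => trifree hclaw hcoclaw hvne hva hvn hab hbc hac
  have hdeg : ∀ (t x y z : V), G.Adj t x → G.Adj t y → G.Adj t z →
      x ≠ y → x ≠ z → y ≠ z → False := by
    intro t x y z htx hty htz hxy hxz hyz
    by_cases h1 : G.Adj x y
    · exact htri htx h1 hty
    by_cases h2 : G.Adj x z
    · exact htri htx h2 htz
    by_cases h3 : G.Adj y z
    · exact htri hty h3 htz
    exact noClaw hclaw htx hty htz h1 h2 h3 hxy hxz hyz
  -- a maximum length induced path
  obtain ⟨x0⟩ : Nonempty V := hconn.nonempty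
  set P : ℕ → Prop := fun l => ∃ (a : V) (b : V) (q : G.Walk a b), q.IsPath ∧ q.length = l
    with hPdef
  have hP0 : P 0 := ⟨x0, x0, SimpleGraph.Walk.nil, SimpleGraph.Walk.IsPath.nil, rfl⟩
  have hPb : ∀ l, P l → l ≤ Fintype.card V := by
    rintro l ⟨a, b, q, hq, rfl⟩
    exact le_of_lt hq.length_lt
  have hPmax : P (Nat.findGreatest P (Fintype.card V)) :=
    Nat.findGreatest_spec (Nat.zero_le _) hP0
  obtain ⟨x, y, p, hp, hplen⟩ := hPmax
  have hmax : ∀ (a b : V) (q : G.Walk a b), q.IsPath → q.length ≤ p.length := by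
    intro a b q hq
    rw [hplen]
    exact Nat.le_findGreatest (hPb _ ⟨a, b, q, hq, rfl⟩) ⟨a, b, q, hq, rfl⟩
  set n := p.length with hn
  have hinj := getVert_inj hp
  have hgetmem : ∀ i, i ≤ n → p.getVert i ∈ p.support :=
    fun i hi => SimpleGraph.Walk.mem_support_iff_exists_getVert.mpr ⟨i, rfl, hi⟩
  -- the path covers all vertices
  have hcov : ∀ w : V, w ∈ p.support := by
    by_contra hw
    push_neg at hw
    obtain ⟨w, hw⟩ := hw
    obtain ⟨q⟩ := hconn.preconnected x w
    obtain ⟨d, _, hdf, hds⟩ := q.exists_boundary_dart {z | z ∈ p.support}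
      p.start_mem_support hw
    obtain ⟨i, hgi, hilen⟩ := SimpleGraph.Walk.mem_support_iff_exists_getVert.mp hdf
    by_cases hi0 : i = 0
    · subst hi0
      rw [SimpleGraph.Walk.getVert_zero] at hgi
      have hadj : G.Adj d.snd x := by rw [hgi]; exact d.adj.symm
      have hq' : (SimpleGraph.Walk.cons hadj p).IsPath := hp.cons hds
      have := hmax _ _ _ hq'
      rw [SimpleGraph.Walk.length_cons] at this
      omega
    · by_cases hin : i = n
      · subst hin
        rw [SimpleGraph.Walk.getVert_length] at hgi
        have hadj : G.Adj d.snd y := by rw [hgi]; exact d.adj.symm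
        have hnsupp : d.snd ∉ p.reverse.support := by
          rw [SimpleGraph.Walk.support_reverse]
          exact fun hmem => hds (List.mem_reverse.mp hmem)
        have hq' : (SimpleGraph.Walk.cons hadj p.reverse).IsPath := hp.reverse.cons hnsupp
        have := hmax _ _ _ hq'
        rw [SimpleGraph.Walk.length_cons, SimpleGraph.Walk.length_reverse] at this
        omega
      · have hilt : i < n := by omega
        have ha1 : G.Adj d.fst (p.getVert (i - 1)) := by
          have := p.adj_getVert_succ (i := i - 1) (by omega)
          rw [Nat.sub_add_cancel (by omega)] at this
          rw [← hgi]
          exact this.symm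
        have ha2 : G.Adj d.fst (p.getVert (i + 1)) := by
          rw [← hgi]
          exact p.adj_getVert_succ hilt
        exact hdeg d.fst _ _ _ ha1 ha2 d.adj
          (fun he => (by omega : ¬(i - 1 = i + 1)) (hinj _ _ (by omega) (by omega) he))
          (fun he => hds (he ▸ hgetmem _ (by omega)))
          (fun he => hds (he ▸ hgetmem _ (by omega)))
  have hnodup : p.support.Nodup := hp.support_nodup
  have huniv : p.support.toFinset = Finset.univ :=
    Finset.eq_univ_iff_forall.mpr fun w => List.mem_toFinset.mpr (hcov w)
  have hcardV : Fintype.card V = n + 1 := by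
    rw [← Finset.card_univ, ← huniv, List.toFinset_card_of_nodup hnodup,
      SimpleGraph.Walk.length_support]
  have hcard6 : 6 ≤ Fintype.card V := by
    have := Fintype.card_le_of_embedding f.toEmbedding
    simpa using this
  have hn5 : 5 ≤ n := by omega
  -- chords are impossible except possibly between the endpoints
  have hchord : ∀ i j, i < j → j ≤ n → G.Adj (p.getVert i) (p.getVert j) →
      j = i + 1 ∨ (i = 0 ∧ j = n) := by
    intro i j hij hj hadj
    by_contra hcon
    push_neg at hcon
    obtain ⟨h1, h2⟩ := hcon
    by_cases hi0 : i = 0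
    · subst hi0
      have hjn : j < n := lt_of_le_of_ne hj (h2 rfl)
      have hj2 : 2 ≤ j := by omega
      have ha1 : G.Adj (p.getVert j) (p.getVert (j - 1)) := by
        have := p.adj_getVert_succ (i := j - 1) (by omega)
        rw [Nat.sub_add_cancel (by omega)] at this
        exact this.symm
      have ha2 : G.Adj (p.getVert j) (p.getVert (j + 1)) := p.adj_getVert_succ hjn
      exact hdeg (p.getVert j) _ _ _ ha1 ha2 hadj.symm
        (fun he => (by omega : ¬(j - 1 = j + 1)) (hinj _ _ (by omega) (by omega) he))
        (fun he => (by omega : ¬(j - 1 = 0)) (hinj _ _ (by omega) (by omega) he))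
        (fun he => (by omega : ¬(j + 1 = 0)) (hinj _ _ (by omega) (by omega) he))
    · have hi1 : 1 ≤ i := by omega
      have hiltn : i < n := by omega
      have ha1 : G.Adj (p.getVert i) (p.getVert (i - 1)) := by
        have := p.adj_getVert_succ (i := i - 1) (by omega)
        rw [Nat.sub_add_cancel (by omega)] at this
        exact this.symm
      have ha2 : G.Adj (p.getVert i) (p.getVert (i + 1)) := p.adj_getVert_succ hiltn
      exact hdeg (p.getVert i) _ _ _ ha1 ha2 hadj
        (fun he => (by omega : ¬(i - 1 = i + 1)) (hinj _ _ (by omega) (by omega) he))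
        (fun he => (by omega : ¬(i - 1 = j)) (hinj _ _ (by omega) (by omega) he))
        (fun he => h1 ((hinj _ _ (by omega) (by omega) he).symm))
  -- the bijection
  have hgbij : Function.Bijective (fun i : Fin (n + 1) => p.getVert i.val) := by
    constructor
    · intro a b he
      exact Fin.ext (hinj a.val b.val (by omega) (by omega) he)
    · intro w
      obtain ⟨i, hgi, hile⟩ := SimpleGraph.Walk.mem_support_iff_exists_getVert.mp (hcov w)
      exact ⟨⟨i, by omega⟩, hgi⟩
  set e : Fin (n + 1) ≃ V := Equiv.ofBijective _ hgbij with hedef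
  have he_app : ∀ i : Fin (n + 1), e i = p.getVert i.val := fun i => rfl
  by_cases hxy : G.Adj x y
  · -- cycle case
    have isoC : cycleGraph (n + 1) ≃g G := by
      refine ⟨e, ?_⟩
      intro a b
      rw [he_app, he_app, cycleGraph_adj', fin_sub_val, fin_sub_val]
      have hav := a.isLt
      have hbv := b.isLt
      constructor
      · intro h
        rcases lt_trichotomy a.val b.val with hlt | heq | hgt
        · rcases hchord a.val b.val hlt (by omega) h with h' | ⟨h0, hnn⟩
          · exact Or.inr (Or.inl (by omega))
          · exact Or.inl (Or.inr (by omega))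
        · exact absurd (Fin.ext heq : a = b) (fun hab => G.irrefl (hab ▸ h))
        · rcases hchord b.val a.val hgt (by omega) h.symm with h' | ⟨h0, hnn⟩
          · exact Or.inl (Or.inl (by omega))
          · exact Or.inr (Or.inr (by omega))
      · intro h
        rcases h with (h | h) | (h | h)
        · -- a.val = b.val + 1
          have := p.adj_getVert_succ (i := b.val) (by omega)
          rw [show b.val + 1 = a.val by omega] at this
          exact this.symm
        · -- a.val = 0, b.val = n
          have hx' : p.getVert a.val = x := by rw [show a.val = 0 by omega]; exact p.getVert_zero
          have hy' : p.getVert b.val = y := by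
            rw [show b.val = n by omega]; exact p.getVert_length
          rw [hx', hy']
          exact hxy
        · have := p.adj_getVert_succ (i := a.val) (by omega)
          rw [show a.val + 1 = b.val by omega] at this
          exact this
        · have hx' : p.getVert b.val = x := by rw [show b.val = 0 by omega]; exact p.getVert_zero
          have hy' : p.getVert a.val = y := by
            rw [show a.val = n by omega]; exact p.getVert_length
          rw [hx', hy']
          exact hxy.symm
    right
    refine ⟨n + 1, ?_, ⟨isoC.symm⟩⟩
    by_contra hlt
    push_neg at hlt
    exact no_P6_C6 (n + 1) (by omega) ((isoC.symm.toEmbedding).comp f)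
  · -- path case
    have isoP : pathGraph (n + 1) ≃g G := by
      refine ⟨e, ?_⟩
      intro a b
      rw [he_app, he_app, pathGraph_adj]
      have hav := a.isLt
      have hbv := b.isLt
      constructor
      · intro h
        rcases lt_trichotomy a.val b.val with hlt | heq | hgt
        · rcases hchord a.val b.val hlt (by omega) h with h' | ⟨h0, hnn⟩
          · exact Or.inl (by omega)
          · exfalso
            have hx' : p.getVert a.val = x := by rw [h0]; exact p.getVert_zero
            have hy' : p.getVert b.val = y := by rw [hnn]; exact p.getVert_length
            rw [hx', hy'] at h
            exact hxy h
        · exact absurd (Fin.ext heq : a = b) (fun hab => G.irrefl (hab ▸ h))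
        · rcases hchord b.val a.val hgt (by omega) h.symm with h' | ⟨h0, hnn⟩
          · exact Or.inr (by omega)
          · exfalso
            have hx' : p.getVert b.val = x := by rw [h0]; exact p.getVert_zero
            have hy' : p.getVert a.val = y := by rw [hnn]; exact p.getVert_length
            rw [hx', hy'] at h
            exact hxy h.symm
      · intro h
        rcases h with h | h
        · have := p.adj_getVert_succ (i := a.val) (by omega)
          rw [h] at this
          exact this
        · have := p.adj_getVert_succ (i := b.val) (by omega)
          rw [h] at this
          exact this.symm
    left
    exact ⟨n + 1, by omega, ⟨isoP.symm⟩⟩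
end helpers
end

section
/- If U is a bipartite simple graph, then the edge-graph S(complement of U) of the complement of U is bipartite. -/
open SimpleGraph

/-- The edge-graph `S(U)`: vertices are edges of `U`; two edges `u = xy` and `v = xz`
(with `x, y, z` pairwise distinct) are adjacent iff `yz` is not an edge of `U`. -/
def edgeGraph {V : Type*} (U : SimpleGraph V) : SimpleGraph U.edgeSet where
  Adj u v := ∃ x y z : V, x ≠ y ∧ x ≠ z ∧ y ≠ z ∧
    (u : Sym2 V) = s(x, y) ∧ (v : Sym2 V) = s(x, z) ∧ ¬ U.Adj y z
  symm := by
    constructor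
    rintro u v ⟨x, y, z, hxy, hxz, hyz, hu, hv, h⟩
    exact ⟨x, z, y, hxz, hxy, hyz.symm, hv, hu, fun h' => h h'.symm⟩
  loopless := by
    constructor
    rintro u ⟨x, y, z, hxy, hxz, hyz, hu, hv, h⟩
    rw [hu, Sym2.eq_iff] at hv
    rcases hv with ⟨-, h1⟩ | ⟨h1, -⟩
    · exact hyz h1
    · exact hxz h1
/-- A graph is bipartite if its vertex set can be partitioned into two independent sets. -/
def IsBipartite {W : Type*} (H : SimpleGraph W) : Prop :=
  ∃ A B : Set W, A ∪ B = Set.univ ∧ A ∩ B = ∅ ∧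
    (∀ x ∈ A, ∀ y ∈ A, ¬ H.Adj x y) ∧ (∀ x ∈ B, ∀ y ∈ B, ¬ H.Adj x y)

/-- If `U` is bipartite, then the edge-graph of the complement of `U` is bipartite. -/
theorem stmt_17 {V : Type*} (U : SimpleGraph V) (h : _root_.IsBipartite U) :
    _root_.IsBipartite (edgeGraph Uᶜ) := by
  classical
  obtain ⟨A, B, hun, hdis, hA, hB⟩ := h
  have hcov : ∀ v : V, v ∉ A → v ∈ B := by
    intro v hv
    have := Set.mem_univ v
    rw [← hun] at this
    rcases this with h' | h'
    · exact absurd h' hv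
    · exact h'
  -- adjacent vertices of U are on opposite sides
  have key : ∀ y z : V, U.Adj y z → ¬ (y ∈ A ↔ z ∈ A) := by
    intro y z hadj hiff
    by_cases hy : y ∈ A
    · exact hA y hy z (hiff.mp hy) hadj
    · exact hB y (hcov y hy) z (hcov z (fun hz => hy (hiff.mpr hz))) hadj
  refine ⟨{e | ∀ x y : V, (e : Sym2 V) = s(x, y) → (x ∈ A ↔ y ∈ A)},
          {e | ∃ x y : V, (e : Sym2 V) = s(x, y) ∧ ¬ (x ∈ A ↔ y ∈ A)}, ?_, ?_, ?_, ?_⟩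
  · ext e
    simp only [Set.mem_union, Set.mem_setOf_eq, Set.mem_univ, iff_true]
    by_cases he : ∀ x y : V, (e : Sym2 V) = s(x, y) → (x ∈ A ↔ y ∈ A)
    · exact Or.inl he
    · push_neg at he
      obtain ⟨x, y, hxy, hiff⟩ := he
      exact Or.inr ⟨x, y, hxy, by tauto⟩
  · ext e
    simp only [Set.mem_inter_iff, Set.mem_setOf_eq, Set.mem_empty_iff_false, iff_false,
      not_and]
    rintro h1 ⟨x, y, hxy, hiff⟩
    exact hiff (h1 x y hxy)
  · rintro u hu v hv ⟨x, y, z, hxy, hxz, hyz, hueq, hveq, hnadj⟩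
    have hUyz : U.Adj y z := by
      by_contra hc
      exact hnadj ((U.compl_adj y z).mpr ⟨hyz, hc⟩)
    have h1 : x ∈ A ↔ y ∈ A := hu x y hueq
    have h2 : x ∈ A ↔ z ∈ A := hv x z hveq
    exact key y z hUyz (h1.symm.trans h2)
  · rintro u hu v hv ⟨x, y, z, hxy, hxz, hyz, hueq, hveq, hnadj⟩
    have hUyz : U.Adj y z := by
      by_contra hc
      exact hnadj ((U.compl_adj y z).mpr ⟨hyz, hc⟩)
    obtain ⟨x1, y1, heq1, hiff1⟩ := hu
    obtain ⟨x2, y2, heq2, hiff2⟩ := hv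
    rw [hueq] at heq1
    rw [hveq] at heq2
    rw [Sym2.eq_iff] at heq1 heq2
    have h1 : ¬ (x ∈ A ↔ y ∈ A) := by
      rcases heq1 with ⟨h1, h2⟩ | ⟨h1, h2⟩ <;> subst h1 <;> subst h2
      · exact hiff1
      · exact fun hi => hiff1 hi.symm
    have h2 : ¬ (x ∈ A ↔ z ∈ A) := by
      rcases heq2 with ⟨h1, h2⟩ | ⟨h1, h2⟩ <;> subst h1 <;> subst h2
      · exact hiff2
      · exact fun hi => hiff2 hi.symm
    refine key y z hUyz ?_
    by_cases hx : x ∈ A <;> by_cases hy : y ∈ A <;> by_cases hz : z ∈ A <;>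
      simp_all [iff_true, iff_false]
end
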